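/- arXiv:2505.04580 — 8 statements merged into one kernel-verified Lean document; each statement's English description precedes it below -/
import Mathlib

section
/- The metric consensus seminorm is submultiplicative: for any M₁ ∈ ℝ^{m×k} and any M₂ ∈ ℝ^{n×m} whose row sums are all equal, |M₂M₁|_p ≤ |M₂|_p · |M₁|_p for every p ∈ [1,∞]. -/
open Matrix Finset
open scoped ENNReal

noncomputable def matPNorm (p : ℝ≥0∞) [Fact (1 ≤ p)] {n m : ℕ}
    (M : Matrix (Fin n) (Fin m) ℝ) : ℝ :=
  ‖LinearMap.toContinuousLinearMap
    (Matrix.toLin (PiLp.basisFun p ℝ (Fin m)) (PiLp.basisFun p ℝ (Fin n)) M)‖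

noncomputable def metricSN (p : ℝ≥0∞) [Fact (1 ≤ p)] {n m : ℕ}
    (M : Matrix (Fin n) (Fin m) ℝ) : ℝ :=
  ⨅ c : Fin m → ℝ, matPNorm p (M - Matrix.of fun _ j => c j)

noncomputable def vecSN (p : ℝ≥0∞) [Fact (1 ≤ p)] {m : ℕ} (x : Fin m → ℝ) : ℝ :=
  ⨅ c : ℝ, ‖(WithLp.equiv p (Fin m → ℝ)).symm (x - fun _ => c)‖

noncomputable def inducedSN (p : ℝ≥0∞) [Fact (1 ≤ p)] {n m : ℕ}
    (M : Matrix (Fin n) (Fin m) ℝ) : ℝ :=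
  sSup {r | ∃ x : Fin m → ℝ, vecSN p x = 1 ∧ r = vecSN p (M.mulVec x)}

noncomputable def coeErg {n : ℕ} (M : Matrix (Fin n) (Fin n) ℝ) : ℝ :=
  (1 / 2) * ⨆ i : Fin n, ⨆ j : Fin n, ∑ k, |M i k - M j k|

def IsStochastic {n : ℕ} (S : Matrix (Fin n) (Fin n) ℝ) : Prop :=
  (∀ i j, 0 ≤ S i j) ∧ ∀ i, ∑ j, S i j = 1

def IsScrambling {n : ℕ} (S : Matrix (Fin n) (Fin n) ℝ) : Prop :=
  IsStochastic S ∧ ∀ i j, ∃ k, 0 < S i k ∧ 0 < S j k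

def EqRowSum (n m : ℕ) : Submodule ℝ (Matrix (Fin n) (Fin m) ℝ) where
  carrier := {M | ∀ i i', ∑ j, M i j = ∑ j, M i' j}
  add_mem' := by
    intro A B hA hB i i'
    simp only [Matrix.add_apply, Finset.sum_add_distrib, hA i i', hB i i']
  zero_mem' := by intro i i'; simp
  smul_mem' := by
    intro c A hA i i'
    simp only [Matrix.smul_apply, smul_eq_mul, ← Finset.mul_sum, hA i i']

noncomputable def prodSeq {n : ℕ} (M : ℕ → Matrix (Fin n) (Fin n) ℝ) :
    ℕ → Matrix (Fin n) (Fin n) ℝ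
  | 0 => 1
  | (i + 1) => M i * prodSeq M i

lemma matPNorm_nonneg (p : ℝ≥0∞) [Fact (1 ≤ p)] {n m : ℕ}
    (M : Matrix (Fin n) (Fin m) ℝ) : 0 ≤ matPNorm p M := norm_nonneg _

lemma matPNorm_mul_le (p : ℝ≥0∞) [Fact (1 ≤ p)] {n m k : ℕ}
    (A : Matrix (Fin n) (Fin m) ℝ) (B : Matrix (Fin m) (Fin k) ℝ) :
    matPNorm p (A * B) ≤ matPNorm p A * matPNorm p B := by
  unfold matPNorm
  rw [show LinearMap.toContinuousLinearMap
      (Matrix.toLin (PiLp.basisFun p ℝ (Fin k)) (PiLp.basisFun p ℝ (Fin n)) (A * B)) =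
      (LinearMap.toContinuousLinearMap
        (Matrix.toLin (PiLp.basisFun p ℝ (Fin m)) (PiLp.basisFun p ℝ (Fin n)) A)).comp
      (LinearMap.toContinuousLinearMap
        (Matrix.toLin (PiLp.basisFun p ℝ (Fin k)) (PiLp.basisFun p ℝ (Fin m)) B)) from by
    ext x
    simp [Matrix.toLin_mul (PiLp.basisFun p ℝ (Fin k)) (PiLp.basisFun p ℝ (Fin m))
      (PiLp.basisFun p ℝ (Fin n)) A B]]
  exact ContinuousLinearMap.opNorm_comp_le _ _

lemma metricSN_nonneg (p : ℝ≥0∞) [Fact (1 ≤ p)] {n m : ℕ}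
    (M : Matrix (Fin n) (Fin m) ℝ) : 0 ≤ metricSN p M :=
  Real.iInf_nonneg fun _ => norm_nonneg _

lemma metricSN_le (p : ℝ≥0∞) [Fact (1 ≤ p)] {n m : ℕ}
    (M : Matrix (Fin n) (Fin m) ℝ) (c : Fin m → ℝ) :
    metricSN p M ≤ matPNorm p (M - Matrix.of fun _ j => c j) :=
  ciInf_le ⟨0, by rintro r ⟨c', rfl⟩; exact norm_nonneg _⟩ c

/-- The metric consensus seminorm is submultiplicative: for any
M₁ ∈ ℝ^{m×k} and any M₂ ∈ ℝ^{n×m} whose row sums are all equal,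
|M₂M₁|_p ≤ |M₂|_p · |M₁|_p for every p ∈ [1,∞]. -/
theorem metricSN_submultiplicative (n m k : ℕ) (p : ℝ≥0∞) [Fact (1 ≤ p)]
    (M₁ : Matrix (Fin m) (Fin k) ℝ) (M₂ : Matrix (Fin n) (Fin m) ℝ)
    (h : ∀ i i', ∑ j, M₂ i j = ∑ j, M₂ i' j) :
    metricSN p (M₂ * M₁) ≤ metricSN p M₂ * metricSN p M₁ := by
  have hb : 0 ≤ metricSN p M₁ := metricSN_nonneg p M₁
  rcases Nat.eq_zero_or_pos n with hn | hn
  · subst hn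
    have h0 : metricSN p (M₂ * M₁) ≤ 0 := by
      refine le_trans (metricSN_le p (M₂ * M₁) 0) (le_of_eq ?_)
      unfold matPNorm
      rw [show LinearMap.toContinuousLinearMap
          (Matrix.toLin (PiLp.basisFun p ℝ (Fin k)) (PiLp.basisFun p ℝ (Fin 0))
            (M₂ * M₁ - Matrix.of fun _ j => (0 : Fin k → ℝ) j)) = 0 from
        ContinuousLinearMap.ext fun x => PiLp.ext fun i => i.elim0]
      exact norm_zero
    exact le_trans h0 (mul_nonneg (metricSN_nonneg p M₂) hb)
  · set i₀ : Fin n := ⟨0, hn⟩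
    have key : ∀ (c₂ : Fin m → ℝ) (c₁ : Fin k → ℝ),
        metricSN p (M₂ * M₁) ≤ matPNorm p (M₂ - Matrix.of fun _ j => c₂ j) *
          matPNorm p (M₁ - Matrix.of fun _ j => c₁ j) := by
      intro c₂ c₁
      set cnew : Fin k → ℝ := fun j =>
        (∑ l, M₂ i₀ l) * c₁ j + ∑ l, c₂ l * (M₁ l j - c₁ j) with hcnew
      have hAB : (M₂ - Matrix.of fun _ j => c₂ j) * (M₁ - Matrix.of fun _ j => c₁ j)
          = M₂ * M₁ - Matrix.of fun _ j => cnew j := by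
        ext i j
        simp only [Matrix.mul_apply, Matrix.sub_apply, Matrix.of_apply, hcnew]
        rw [← h i i₀]
        simp only [sub_mul, mul_sub, Finset.sum_sub_distrib, Finset.sum_mul]
        ring
      calc metricSN p (M₂ * M₁) ≤ matPNorm p (M₂ * M₁ - Matrix.of fun _ j => cnew j) :=
            metricSN_le p (M₂ * M₁) cnew
        _ = matPNorm p ((M₂ - Matrix.of fun _ j => c₂ j) * (M₁ - Matrix.of fun _ j => c₁ j)) := by
            rw [hAB]
        _ ≤ _ := matPNorm_mul_le p _ _
    have hmul : metricSN p M₁ * metricSN p M₂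
        = ⨅ c₂ : Fin m → ℝ, metricSN p M₁ * matPNorm p (M₂ - Matrix.of fun _ j => c₂ j) :=
      Real.smul_iInf_of_nonneg hb _
    have hmul2 : ∀ c₂ : Fin m → ℝ, matPNorm p (M₂ - Matrix.of fun _ j => c₂ j) * metricSN p M₁
        = ⨅ c₁ : Fin k → ℝ, matPNorm p (M₂ - Matrix.of fun _ j => c₂ j)
          * matPNorm p (M₁ - Matrix.of fun _ j => c₁ j) :=
      fun c₂ => Real.smul_iInf_of_nonneg (norm_nonneg _) _
    rw [mul_comm, hmul]
    refine le_ciInf fun c₂ => ?_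
    rw [mul_comm, hmul2 c₂]
    exact le_ciInf fun c₁ => key c₂ c₁
end

section
/- Let M ∈ ℝ^{n×n} and let q = ⌊n/2⌋. Then the metric consensus seminorm for p = 1 satisfies |M|₁ = max over columns j of ( (sum of the q largest entries of column j) − (sum of the q smallest entries of column j) ). -/
open Matrix Finset
open scoped ENNReal

lemma piLp_one_norm {k : ℕ} (x : PiLp 1 (fun _ : Fin k => ℝ)) :
    ‖x‖ = ∑ i, |x i| := by
  rw [PiLp.norm_eq_sum (by norm_num : (0:ℝ) < (1:ℝ≥0∞).toReal)]
  simp [Real.rpow_one]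

lemma toLin_one_apply {n m : ℕ} (M : Matrix (Fin n) (Fin m) ℝ)
    (x : PiLp 1 (fun _ : Fin m => ℝ)) (i : Fin n) :
    (Matrix.toLin (PiLp.basisFun 1 ℝ (Fin m)) (PiLp.basisFun 1 ℝ (Fin n)) M) x i
      = M.mulVec (fun j => x j) i := by
  rw [Matrix.toLin_apply]
  have hs : (∑ k : Fin n, (M *ᵥ ⇑((PiLp.basisFun 1 ℝ (Fin m)).repr x)) k •
      (PiLp.basisFun 1 ℝ (Fin n)) k) i
      = ∑ k : Fin n, ((M *ᵥ ⇑((PiLp.basisFun 1 ℝ (Fin m)).repr x)) k •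
      (PiLp.basisFun 1 ℝ (Fin n)) k) i := by rw [WithLp.ofLp_sum]; exact Finset.sum_apply i _ _
  rw [hs]
  simp only [PiLp.smul_apply, PiLp.basisFun_apply, WithLp.equiv_symm_apply, PiLp.toLp_apply, PiLp.ofLp_single,
    Pi.single_apply, smul_eq_mul, mul_ite, mul_one, mul_zero, Finset.sum_ite_eq', Finset.sum_ite_eq,
    Finset.mem_univ, if_true]
  congr 1

lemma matPNorm_one {n m : ℕ} (hm : 0 < m) (M : Matrix (Fin n) (Fin m) ℝ) :
    matPNorm 1 M = (Finset.univ.sup'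
      (Finset.univ_nonempty_iff.mpr (Fin.pos_iff_nonempty.mp hm))
      fun j : Fin m => ∑ i, |M i j|) := by
  have hne : (Finset.univ : Finset (Fin m)).Nonempty :=
    Finset.univ_nonempty_iff.mpr (Fin.pos_iff_nonempty.mp hm)
  set L := LinearMap.toContinuousLinearMap
    (Matrix.toLin (PiLp.basisFun 1 ℝ (Fin m)) (PiLp.basisFun 1 ℝ (Fin n)) M) with hL
  set K := Finset.univ.sup' hne fun j : Fin m => ∑ i, |M i j| with hK
  have hLapp : ∀ (x : PiLp 1 (fun _ : Fin m => ℝ)) (i : Fin n),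
      L x i = M.mulVec (fun j => x j) i := fun x i => toLin_one_apply M x i
  have hK0 : 0 ≤ K := by
    obtain ⟨j, hj⟩ := hne
    exact le_trans (Finset.sum_nonneg fun i _ => abs_nonneg _) (Finset.le_sup' (fun j : Fin m => ∑ i, |M i j|) hj)
  apply le_antisymm
  · apply ContinuousLinearMap.opNorm_le_bound _ hK0
    intro x
    rw [piLp_one_norm, piLp_one_norm]
    calc ∑ i, |L x i| = ∑ i, |∑ j, M i j * x j| := by
          simp only [hLapp]; rfl
      _ ≤ ∑ i, ∑ j, |M i j * x j| :=
          Finset.sum_le_sum fun i _ => Finset.abs_sum_le_sum_abs _ _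
      _ = ∑ j, (∑ i, |M i j|) * |x j| := by
          rw [Finset.sum_comm]
          exact Finset.sum_congr rfl fun j _ => by
            rw [Finset.sum_mul]
            exact Finset.sum_congr rfl fun i _ => (abs_mul _ _)
      _ ≤ ∑ j, K * |x j| := Finset.sum_le_sum fun j _ =>
          mul_le_mul_of_nonneg_right (Finset.le_sup' (fun j : Fin m => ∑ i, |M i j|) (Finset.mem_univ j)) (abs_nonneg _)
      _ = K * ∑ j, |x j| := by rw [Finset.mul_sum]
  · obtain ⟨j, -, hj⟩ := Finset.exists_mem_eq_sup' hne fun j : Fin m => ∑ i, |M i j|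
    rw [hK, hj]
    have hx : ‖((WithLp.equiv 1 (Fin m → ℝ)).symm (Pi.single j 1) : PiLp 1 (fun _ : Fin m => ℝ))‖ = 1 := by
      rw [piLp_one_norm]
      simp [WithLp.equiv_symm_apply, PiLp.toLp_apply, Pi.single_apply, apply_ite abs]
    have := L.le_opNorm ((WithLp.equiv 1 (Fin m → ℝ)).symm (Pi.single j 1))
    rw [hx, mul_one, piLp_one_norm] at this
    refine le_trans (le_of_eq ?_) this
    refine Finset.sum_congr rfl fun i _ => ?_
    rw [hLapp]
    congr 1
    simp [Matrix.mulVec, dotProduct, WithLp.equiv_symm_apply, PiLp.toLp_apply, Pi.single_apply, mul_ite]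

lemma card_filter_val_lt (n t : ℕ) (ht : t ≤ n) :
    ((Finset.univ : Finset (Fin n)).filter fun i : Fin n => (i : ℕ) < t).card = t := by
  rcases eq_or_lt_of_le ht with rfl | h
  · rw [Finset.filter_true_of_mem (fun i _ => i.isLt)]
    simp
  · have : ((Finset.univ : Finset (Fin n)).filter fun i : Fin n => (i : ℕ) < t)
        = Finset.Iio (⟨t, h⟩ : Fin n) := by
      ext i; simp [Fin.lt_def]
    rw [this, Fin.card_Iio]

lemma card_filter_val_ge (n t : ℕ) (ht : t ≤ n) :
    ((Finset.univ : Finset (Fin n)).filter fun i : Fin n => ¬ (i : ℕ) < t).card = n - t := by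
  have h1 := Finset.card_filter_add_card_filter_not
    (s := (Finset.univ : Finset (Fin n))) (p := fun i : Fin n => (i : ℕ) < t)
  rw [card_filter_val_lt n t ht, Finset.card_univ, Fintype.card_fin] at h1
  omega

lemma col_lower {n : ℕ} (m : Fin n → ℝ)
    (h : ((Finset.univ : Finset (Fin n)).powersetCard (n / 2)).Nonempty) (c : ℝ) :
    ((Finset.univ.powersetCard (n / 2)).sup' h fun A => ∑ i ∈ A, m i)
      - ((Finset.univ.powersetCard (n / 2)).inf' h fun A => ∑ i ∈ A, m i)
      ≤ ∑ i, |m i - c| := by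
  obtain ⟨A, hA, hAs⟩ := Finset.exists_mem_eq_sup' h fun A => ∑ i ∈ A, m i
  obtain ⟨B, hB, hBs⟩ := Finset.exists_mem_eq_inf' h fun A => ∑ i ∈ A, m i
  rw [hAs, hBs]
  rw [Finset.mem_powersetCard] at hA hB
  have hcard : (A \ B).card = (B \ A).card := by
    have h1 := Finset.card_sdiff_add_card_inter A B
    have h2 := Finset.card_sdiff_add_card_inter B A
    rw [Finset.inter_comm] at h2
    omega
  have hsum : ∑ i ∈ A, m i - ∑ i ∈ B, m i = ∑ i ∈ A \ B, m i - ∑ i ∈ B \ A, m i := by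
    have h1 := Finset.sum_inter_add_sum_sdiff A B m
    have h2 := Finset.sum_inter_add_sum_sdiff B A m
    rw [Finset.inter_comm] at h2
    linarith
  rw [hsum]
  have hdisj : Disjoint (A \ B) (B \ A) := disjoint_sdiff_sdiff
  calc ∑ i ∈ A \ B, m i - ∑ i ∈ B \ A, m i
      = ∑ i ∈ A \ B, (m i - c) + ∑ i ∈ B \ A, (c - m i) := by
        rw [Finset.sum_sub_distrib, Finset.sum_sub_distrib, Finset.sum_const,
          Finset.sum_const, hcard]
        ring
    _ ≤ ∑ i ∈ A \ B, |m i - c| + ∑ i ∈ B \ A, |m i - c| := by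
        refine add_le_add (Finset.sum_le_sum fun i _ => le_abs_self _)
          (Finset.sum_le_sum fun i _ => ?_)
        rw [← abs_neg, neg_sub]
        exact le_abs_self _
    _ = ∑ i ∈ (A \ B) ∪ (B \ A), |m i - c| := (Finset.sum_union hdisj).symm
    _ ≤ ∑ i, |m i - c| := Finset.sum_le_sum_of_subset_of_nonneg
        (Finset.subset_univ _) (fun i _ _ => abs_nonneg _)

lemma col_upper {n : ℕ} (hn : 0 < n) (m : Fin n → ℝ)
    (h : ((Finset.univ : Finset (Fin n)).powersetCard (n / 2)).Nonempty) :
    ∃ c : ℝ, ∑ i, |m i - c| ≤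
      ((Finset.univ.powersetCard (n / 2)).sup' h fun A => ∑ i ∈ A, m i)
      - ((Finset.univ.powersetCard (n / 2)).inf' h fun A => ∑ i ∈ A, m i) := by
  set q := n / 2 with hqdef
  have hq : q < n := Nat.div_lt_self hn one_lt_two
  set σ := Tuple.sort m with hσ
  have hmono : Monotone (m ∘ σ) := Tuple.monotone_sort m
  set g : Fin n → ℝ := m ∘ σ with hg
  set c := g ⟨q, hq⟩ with hc
  refine ⟨c, ?_⟩
  have hre : ∑ i, |m i - c| = ∑ i, |g i - c| :=
    (Equiv.sum_comp σ (fun i => |m i - c|)).symm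
  rw [hre]
  set S1 := Finset.univ.filter (fun i : Fin n => (i : ℕ) < q) with hS1
  set S2 := Finset.univ.filter (fun i : Fin n => ¬ (i : ℕ) < q) with hS2
  set S3 := Finset.univ.filter (fun i : Fin n => ¬ (i : ℕ) < n - q) with hS3
  have hS1card : S1.card = q := card_filter_val_lt n q hq.le
  have hS3card : S3.card = q := by
    rw [hS3, card_filter_val_ge n (n - q) (by omega)]; omega
  have hS3sub : S3 ⊆ S2 := by
    intro i hi
    rw [hS3, Finset.mem_filter] at hi
    rw [hS2, Finset.mem_filter]
    exact ⟨hi.1, by omega⟩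
  have hsplit : ∑ i, |g i - c| = ∑ i ∈ S1, |g i - c| + ∑ i ∈ S2, |g i - c| :=
    (Finset.sum_filter_add_sum_filter_not Finset.univ _ _).symm
  have hS1val : ∀ i ∈ S1, |g i - c| = c - g i := by
    intro i hi
    rw [hS1, Finset.mem_filter] at hi
    have : g i ≤ c := hmono (by simp [Fin.le_def]; omega)
    rw [abs_of_nonpos (by linarith)]; ring
  have hS2val : ∀ i ∈ S2, |g i - c| = g i - c := by
    intro i hi
    rw [hS2, Finset.mem_filter] at hi
    have : c ≤ g i := hmono (by simp [Fin.le_def]; omega)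
    rw [abs_of_nonneg (by linarith)]
  have hS2sum : ∑ i ∈ S2, (g i - c) = ∑ i ∈ S3, (g i - c) := by
    refine (Finset.sum_subset hS3sub fun i hi hni => ?_).symm
    rw [hS2, Finset.mem_filter] at hi
    have h2 : (i : ℕ) < n - q := by
      by_contra hcon
      exact hni (by rw [hS3, Finset.mem_filter]; exact ⟨Finset.mem_univ _, hcon⟩)
    have hiq : (i : ℕ) = q := by have := hi.2; omega
    have : i = (⟨q, hq⟩ : Fin n) := Fin.ext hiq
    rw [this, ← hc]; ring
  have himg : ∀ S : Finset (Fin n), S.card = q →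
      (Finset.image σ S ∈ Finset.univ.powersetCard q ∧
        ∑ i ∈ S, g i = ∑ j ∈ Finset.image σ S, m j) := by
    intro S hcard
    constructor
    · rw [Finset.mem_powersetCard]
      exact ⟨Finset.subset_univ _,
        by rw [Finset.card_image_of_injective _ σ.injective, hcard]⟩
    · rw [Finset.sum_image (fun a _ b _ hab => σ.injective hab)]
      rfl
  obtain ⟨hm3, he3⟩ := himg S3 hS3card
  obtain ⟨hm1, he1⟩ := himg S1 hS1card
  have hT : ∑ i ∈ S3, g i ≤
      (Finset.univ.powersetCard (n / 2)).sup' h fun A => ∑ i ∈ A, m i := by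
    rw [he3]
    exact Finset.le_sup' (fun A => ∑ i ∈ A, m i) hm3
  have hB : ((Finset.univ.powersetCard (n / 2)).inf' h fun A => ∑ i ∈ A, m i)
      ≤ ∑ i ∈ S1, g i := by
    rw [he1]
    exact Finset.inf'_le (fun A => ∑ i ∈ A, m i) hm1
  have e1 : ∑ i ∈ S1, |g i - c| = q * c - ∑ i ∈ S1, g i := by
    rw [Finset.sum_congr rfl hS1val, Finset.sum_sub_distrib, Finset.sum_const, hS1card,
      nsmul_eq_mul]
  have e2 : ∑ i ∈ S2, |g i - c| = ∑ i ∈ S3, g i - q * c := by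
    rw [Finset.sum_congr rfl hS2val, hS2sum, Finset.sum_sub_distrib, Finset.sum_const,
      hS3card, nsmul_eq_mul]
  rw [hsplit, e1, e2]
  linarith

/-- For M ∈ ℝ^{n×n} and q = ⌊n/2⌋, the metric consensus seminorm for
p = 1 equals the maximum over columns j of the sum of the q largest entries of
column j minus the sum of the q smallest entries of column j (expressed here as the
maximum, resp. minimum, over all subsets of q row indices of the corresponding
partial column sums). -/
theorem metricSN_one_eq (n : ℕ) (hn : 0 < n) (M : Matrix (Fin n) (Fin n) ℝ) :
    metricSN 1 M =
      Finset.univ.sup'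
        (Finset.univ_nonempty_iff.mpr (Fin.pos_iff_nonempty.mp hn))
        (fun j : Fin n =>
          ((Finset.univ.powersetCard (n / 2)).sup'
            ((Finset.powersetCard_nonempty).mpr
              (by simpa using Nat.div_le_self n 2))
            fun A => ∑ i ∈ A, M i j)
          -
          ((Finset.univ.powersetCard (n / 2)).inf'
            ((Finset.powersetCard_nonempty).mpr
              (by simpa using Nat.div_le_self n 2))
            fun A => ∑ i ∈ A, M i j)) := by
  have hne : (Finset.univ : Finset (Fin n)).Nonempty :=
    Finset.univ_nonempty_iff.mpr (Fin.pos_iff_nonempty.mp hn)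
  have hPC : ((Finset.univ : Finset (Fin n)).powersetCard (n / 2)).Nonempty :=
    (Finset.powersetCard_nonempty).mpr (by simpa using Nat.div_le_self n 2)
  have hbdd : BddBelow (Set.range fun c : Fin n → ℝ =>
      matPNorm 1 (M - Matrix.of fun _ j => c j)) :=
    ⟨0, fun r ⟨c, hc⟩ => hc ▸ norm_nonneg _⟩
  have hentry : ∀ (c : Fin n → ℝ) (j : Fin n),
      (∑ i, |(M - Matrix.of fun (_ k : Fin n) => c k) i j|) = ∑ i, |M i j - c j| := by
    intro c j
    refine Finset.sum_congr rfl fun i _ => ?_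
    rw [Matrix.sub_apply, Matrix.of_apply]
  apply le_antisymm
  · choose cm hcm using fun j : Fin n => col_upper hn (fun i => M i j) hPC
    refine le_trans (ciInf_le hbdd cm) ?_
    rw [matPNorm_one hn]
    refine Finset.sup'_le _ _ fun j _ => ?_
    refine le_trans (le_of_eq (hentry cm j)) (le_trans (hcm j) ?_)
    exact Finset.le_sup' (fun j : Fin n =>
      ((Finset.univ.powersetCard (n / 2)).sup' hPC fun A => ∑ i ∈ A, M i j)
        - ((Finset.univ.powersetCard (n / 2)).inf' hPC fun A => ∑ i ∈ A, M i j))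
      (Finset.mem_univ j)
  · refine le_ciInf fun c => ?_
    rw [matPNorm_one hn]
    refine Finset.sup'_le _ _ fun j _ => ?_
    refine le_trans ?_ (le_trans (le_of_eq (hentry c j).symm)
      (Finset.le_sup' (fun j => ∑ i, |(M - Matrix.of fun (_ k : Fin n) => c k) i j|) (Finset.mem_univ j)))
    exact col_lower (fun i => M i j) hPC (c j)
end

section
/- If M ∈ ℝ^{n×n} is doubly stochastic (entrywise nonnegative with all row sums and all column sums equal to 1), then the metric consensus seminorm for p = 2 satisfies |M|₂ = σ₂(M), the second largest singular value of M. -/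
open Matrix Finset
open scoped ENNReal

/-- The singular values of a real square matrix M: the square roots of the
eigenvalues of MᵀM. -/
noncomputable def singularValues {n : ℕ} (M : Matrix (Fin n) (Fin n) ℝ) : Fin n → ℝ :=
  fun i => Real.sqrt ((show (Mᵀ * M).IsHermitian from by
    simpa only [Matrix.conjTranspose_eq_transpose_of_trivial] using
      Matrix.isHermitian_conjTranspose_mul_self M).eigenvalues i)


open scoped RealInnerProductSpace

section AuxCSN

variable {n : ℕ}

lemma csn_ds_rayleigh (B : Matrix (Fin n) (Fin n) ℝ) (h0 : ∀ i j, 0 ≤ B i j)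
    (hr : ∀ i, ∑ j, B i j = 1) (hc : ∀ j, ∑ i, B i j = 1) (x : Fin n → ℝ) :
    x ⬝ᵥ B *ᵥ x ≤ ∑ i, x i ^ 2 := by
  have key : x ⬝ᵥ B *ᵥ x = ∑ i, ∑ j, B i j * (x i * x j) := by
    simp only [dotProduct, Matrix.mulVec, Finset.mul_sum]
    exact Finset.sum_congr rfl fun i _ => Finset.sum_congr rfl fun j _ => by ring
  have step : x ⬝ᵥ B *ᵥ x ≤ ∑ i, ∑ j, (B i j * x i ^ 2 / 2 + B i j * x j ^ 2 / 2) := by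
    rw [key]
    refine Finset.sum_le_sum fun i _ => Finset.sum_le_sum fun j _ => ?_
    nlinarith [sq_nonneg (x i - x j), h0 i j, sq_nonneg (x i + x j)]
  refine step.trans (le_of_eq ?_)
  have h1 : ∑ i, ∑ j, B i j * x i ^ 2 / 2 = ∑ i, x i ^ 2 / 2 := by
    refine Finset.sum_congr rfl fun i _ => ?_
    rw [← Finset.sum_div, ← Finset.sum_mul, hr i, one_mul]
  have h2 : ∑ i : Fin n, ∑ j, B i j * x j ^ 2 / 2 = ∑ j, x j ^ 2 / 2 := by
    rw [Finset.sum_comm]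
    refine Finset.sum_congr rfl fun j _ => ?_
    rw [← Finset.sum_div, ← Finset.sum_mul, hc j, one_mul]
  simp only [Finset.sum_add_distrib, h1, h2]
  rw [← Finset.sum_add_distrib]
  exact Finset.sum_congr rfl fun i _ => by ring

end AuxCSN

section Core
variable {n : ℕ} (M : Matrix (Fin n) (Fin n) ℝ)

local notation "hA" => (Matrix.isHermitian_conjTranspose_mul_self M : Matrix.IsHermitian (Mᵀ * M))
local notation "lam" => Matrix.IsHermitian.eigenvalues hA
local notation "uu" => Matrix.IsHermitian.eigenvectorBasis hA
local notation "T" => Matrix.toEuclideanLin (Mᴴ * M)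

lemma csn_qf_eq (x : Fin n → ℝ) :
    x ⬝ᵥ (Mᴴ * M) *ᵥ x = ∑ k, (M *ᵥ x) k ^ 2 := by
  rw [Matrix.conjTranspose_eq_transpose_of_trivial, ← Matrix.mulVec_mulVec,
    Matrix.dotProduct_mulVec, Matrix.vecMul_transpose]
  simp [dotProduct, sq]

lemma csn_bridge (x y : EuclideanSpace ℝ (Fin n)) : ⟪x, T y⟫ = x ⬝ᵥ (Mᴴ * M) *ᵥ y := by
  rw [show ⟪x, T y⟫ = ∑ i, x i * (T y) i by
    simp [PiLp.inner_apply]; exact Finset.sum_congr rfl fun _ _ => mul_comm _ _]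
  rfl

lemma csn_hAT : (Mᴴ * M)ᵀ = Mᴴ * M := by
  rw [Matrix.conjTranspose_eq_transpose_of_trivial, Matrix.transpose_mul,
    Matrix.transpose_transpose]

lemma csn_sym_dot' (x y : Fin n → ℝ) : x ⬝ᵥ (Mᴴ * M) *ᵥ y = y ⬝ᵥ (Mᴴ * M) *ᵥ x := by
  conv_lhs => rw [Matrix.dotProduct_mulVec, ← csn_hAT M, Matrix.vecMul_transpose,
    dotProduct_comm]

lemma csn_hsym (x y : EuclideanSpace ℝ (Fin n)) : ⟪x, T y⟫ = ⟪T x, y⟫ := by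
  rw [csn_bridge, real_inner_comm, csn_bridge, csn_sym_dot']

lemma csn_hTu (i : Fin n) : T (uu i) = lam i • uu i :=
  WithLp.ofLp_injective 2 (Matrix.IsHermitian.mulVec_eigenvectorBasis hA i)

lemma csn_hrepr (y : EuclideanSpace ℝ (Fin n)) (i : Fin n) :
    ⟪uu i, T y⟫ = lam i * ⟪uu i, y⟫ := by
  rw [csn_hsym, csn_hTu]
  exact real_inner_smul_left _ _ _

lemma csn_G1 (y : EuclideanSpace ℝ (Fin n)) :
    ⟪y, T y⟫ = ∑ i, lam i * ⟪uu i, y⟫ ^ 2 := by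
  rw [← OrthonormalBasis.sum_inner_mul_inner uu y (T y)]
  refine Finset.sum_congr rfl fun i _ => ?_
  rw [csn_hrepr, real_inner_comm y (uu i)]; ring

lemma csn_Gpol (x y : EuclideanSpace ℝ (Fin n)) :
    ∑ i, ⟪uu i, x⟫ * ⟪uu i, y⟫ = ⟪x, y⟫ := by
  rw [← OrthonormalBasis.sum_inner_mul_inner uu x y]
  exact Finset.sum_congr rfl fun i _ => by rw [real_inner_comm x (uu i)]

lemma csn_G2 (y : EuclideanSpace ℝ (Fin n)) :
    ∑ i, ⟪uu i, y⟫ ^ 2 = ∑ k, y k ^ 2 := by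
  have := csn_Gpol M y y
  rw [show ⟪y, y⟫ = ∑ k, y k * y k by simp only [PiLp.inner_apply, Real.inner_apply]] at this
  simpa [sq] using this

lemma csn_lam_eq (i : Fin n) :
    lam i = (uu i : Fin n → ℝ) ⬝ᵥ (Mᴴ * M) *ᵥ (uu i : Fin n → ℝ) := by
  have h := csn_bridge M (uu i) (uu i)
  rw [csn_hTu, real_inner_smul_right,
    real_inner_self_eq_norm_sq, (Matrix.IsHermitian.eigenvectorBasis hA).orthonormal.1 i] at h
  rw [← h]; ring

lemma csn_lam_nonneg (i : Fin n) : 0 ≤ lam i := by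
  rw [csn_lam_eq, csn_qf_eq]
  exact Finset.sum_nonneg fun k _ => sq_nonneg _

lemma csn_A_apply (i j : Fin n) : (Mᴴ * M) i j = ∑ k, M k i * M k j := by
  simp [Matrix.mul_apply, Matrix.conjTranspose_apply]

variable (hnonneg : ∀ i j, 0 ≤ M i j) (hrow : ∀ i, ∑ j, M i j = 1)
  (hcol : ∀ j, ∑ i, M i j = 1)

include hnonneg in
lemma csn_A_nonneg : ∀ i j, 0 ≤ (Mᴴ * M) i j := fun i j => by
  rw [csn_A_apply]
  exact Finset.sum_nonneg fun k _ => mul_nonneg (hnonneg k i) (hnonneg k j)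

include hrow hcol in
lemma csn_A_row : ∀ i, ∑ j, (Mᴴ * M) i j = 1 := fun i => by
  simp_rw [csn_A_apply]
  rw [Finset.sum_comm]
  calc ∑ k, ∑ j, M k i * M k j = ∑ k, M k i * ∑ j, M k j := by
        simp_rw [Finset.mul_sum]
    _ = ∑ k, M k i := by simp_rw [hrow]; simp
    _ = 1 := hcol i

include hrow hcol in
lemma csn_A_col : ∀ j, ∑ i, (Mᴴ * M) i j = 1 := fun j => by
  have h : ∀ i, (Mᴴ * M) i j = (Mᴴ * M) j i := fun i => by
    rw [csn_A_apply, csn_A_apply]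
    exact Finset.sum_congr rfl fun k _ => mul_comm _ _
  simp_rw [h]
  exact csn_A_row M hrow hcol j

include hrow hcol in
lemma csn_A_one : (Mᴴ * M) *ᵥ (fun _ => 1) = fun _ => (1:ℝ) := by
  funext i
  simp only [Matrix.mulVec, dotProduct, mul_one]
  exact csn_A_row M hrow hcol i

lemma csn_unit (i : Fin n) : ∑ k, (uu i : EuclideanSpace ℝ (Fin n)) k ^ 2 = 1 := by
  have h : ⟪(uu i : EuclideanSpace ℝ (Fin n)), uu i⟫ = ∑ k, (uu i) k * (uu i) k := by
    simp only [PiLp.inner_apply, Real.inner_apply]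
  rw [real_inner_self_eq_norm_sq, (Matrix.IsHermitian.eigenvectorBasis hA).orthonormal.1 i] at h
  simpa [sq] using h.symm

include hnonneg hrow hcol in
lemma csn_lam_le_one (i : Fin n) : lam i ≤ 1 := by
  rw [csn_lam_eq]
  have h := csn_ds_rayleigh (Mᴴ * M) (csn_A_nonneg M hnonneg)
    (csn_A_row M hrow hcol) (csn_A_col M hrow hcol) (uu i)
  calc (uu i : Fin n → ℝ) ⬝ᵥ (Mᴴ * M) *ᵥ (uu i : Fin n → ℝ)
      ≤ ∑ k, (uu i : EuclideanSpace ℝ (Fin n)) k ^ 2 := h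
    _ = 1 := csn_unit M i

include hnonneg hrow hcol in
lemma csn_L3 (hn : 0 < n) (t r : Fin n) (hmaxt : ∀ i, lam i ≤ lam t)
    (hsecond : ∀ i, i ≠ t → lam i ≤ lam r)
    (y : EuclideanSpace ℝ (Fin n)) (hy : ∑ k, y k = 0) :
    y ⬝ᵥ (Mᴴ * M) *ᵥ y ≤ lam r * ∑ k, y k ^ 2 := by
  rw [← csn_bridge M y y, csn_G1]
  by_cases hcase : lam t ≤ lam r
  · calc ∑ i, lam i * ⟪uu i, y⟫ ^ 2 ≤ ∑ i, lam r * ⟪uu i, y⟫ ^ 2 :=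
        Finset.sum_le_sum fun i _ =>
          mul_le_mul_of_nonneg_right ((hmaxt i).trans hcase) (sq_nonneg _)
      _ = lam r * ∑ i, ⟪uu i, y⟫ ^ 2 := (Finset.mul_sum _ _ _).symm
      _ = lam r * ∑ k, y k ^ 2 := by rw [csn_G2]
  · push_neg at hcase
    have he1 : lam t ≤ 1 := csn_lam_le_one M hnonneg hrow hcol t
    set e : EuclideanSpace ℝ (Fin n) := WithLp.toLp 2 (fun _ => 1) with he
    have hTe : T e = e := by
      apply WithLp.ofLp_injective 2; funext k; exact congrFun (csn_A_one M hrow hcol) k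
    have hd : ∀ i, lam i * ⟪uu i, e⟫ = ⟪uu i, e⟫ := fun i => by
      rw [← csn_hrepr, hTe]
    have hd0 : ∀ i, i ≠ t → ⟪uu i, e⟫ = 0 := by
      intro i hi
      have h1 : lam i < 1 := lt_of_le_of_lt (hsecond i hi) (lt_of_lt_of_le hcase he1)
      have h2 : (lam i - 1) * ⟪uu i, e⟫ = 0 := by linear_combination hd i
      rcases mul_eq_zero.mp h2 with h3 | h3
      · exact absurd (by linarith : lam i = 1) (ne_of_lt h1)
      · exact h3
    have hdt : ⟪uu t, e⟫ ^ 2 = (n : ℝ) := by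
      have h2 := csn_G2 M e
      rw [Finset.sum_eq_single t (fun i _ hi => by rw [hd0 i hi]; ring) (by simp)] at h2
      rw [h2]
      simp [he]
    have hdt0 : ⟪uu t, e⟫ ≠ 0 := by
      intro h0
      rw [h0] at hdt
      have : (0:ℝ) < n := by exact_mod_cast hn
      simp at hdt; linarith
    have hct : ⟪uu t, y⟫ = 0 := by
      have hp := csn_Gpol M e y
      have hey : ⟪e, y⟫ = 0 := by
        rw [show ⟪e, y⟫ = ∑ k, e k * y k by simp only [PiLp.inner_apply, Real.inner_apply]]
        simpa [he] using hy
      rw [Finset.sum_eq_single t (fun i _ hi => by rw [hd0 i hi]; ring) (by simp), hey] at hp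
      exact (mul_eq_zero.mp hp).resolve_left hdt0
    have hr0 : 0 ≤ lam r := csn_lam_nonneg M r
    have hterm : ∀ i ∈ Finset.univ, lam i * ⟪uu i, y⟫ ^ 2 ≤ lam r * ⟪uu i, y⟫ ^ 2 := by
      intro i _
      by_cases hit : i = t
      · subst hit; rw [hct]; simp
      · exact mul_le_mul_of_nonneg_right (hsecond i hit) (sq_nonneg _)
    calc ∑ i, lam i * ⟪uu i, y⟫ ^ 2 ≤ ∑ i, lam r * ⟪uu i, y⟫ ^ 2 :=
        Finset.sum_le_sum hterm
      _ = lam r * ∑ i, ⟪uu i, y⟫ ^ 2 := (Finset.mul_sum _ _ _).symm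
      _ = lam r * ∑ k, y k ^ 2 := by rw [csn_G2]

lemma csn_L4 (t r : Fin n) (htr : t ≠ r) (hrt : lam r ≤ lam t) :
    ∃ x : EuclideanSpace ℝ (Fin n),
      (∑ k, x k = 0) ∧ (∑ k, x k ^ 2 = 1) ∧ lam r ≤ x ⬝ᵥ (Mᴴ * M) *ᵥ x := by
  set S₁ := ∑ k, (uu t : EuclideanSpace ℝ (Fin n)) k with hS₁
  set S₂ := ∑ k, (uu r : EuclideanSpace ℝ (Fin n)) k with hS₂
  obtain ⟨a, b, hab, hmix⟩ : ∃ a b : ℝ, a ^ 2 + b ^ 2 = 1 ∧ a * S₁ + b * S₂ = 0 := by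
    by_cases hS : S₁ = 0 ∧ S₂ = 0
    · exact ⟨1, 0, by norm_num, by simp [hS.1]⟩
    · have hpos : (0:ℝ) < S₁ ^ 2 + S₂ ^ 2 := by
        rcases (not_and_or.mp hS) with h | h
        · nlinarith [sq_nonneg S₂, mul_self_pos.mpr h]
        · nlinarith [sq_nonneg S₁, mul_self_pos.mpr h]
      have hR2 : Real.sqrt (S₁ ^ 2 + S₂ ^ 2) ^ 2 = S₁ ^ 2 + S₂ ^ 2 := Real.sq_sqrt hpos.le
      have hRne : Real.sqrt (S₁ ^ 2 + S₂ ^ 2) ≠ 0 :=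
        ne_of_gt (Real.sqrt_pos.mpr hpos)
      refine ⟨-S₂ / Real.sqrt (S₁ ^ 2 + S₂ ^ 2), S₁ / Real.sqrt (S₁ ^ 2 + S₂ ^ 2), ?_, ?_⟩
      · rw [div_pow, div_pow, hR2]
        field_simp
        ring
      · field_simp
        ring
  have hself : ∀ i, ⟪(uu i : EuclideanSpace ℝ (Fin n)), uu i⟫ = (1:ℝ) := fun i => by
    rw [real_inner_self_eq_norm_sq, (Matrix.IsHermitian.eigenvectorBasis hA).orthonormal.1 i]
    norm_num
  have horth : ⟪(uu t : EuclideanSpace ℝ (Fin n)), uu r⟫ = 0 :=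
    (Matrix.IsHermitian.eigenvectorBasis hA).orthonormal.2 htr
  have horth' : ⟪(uu r : EuclideanSpace ℝ (Fin n)), uu t⟫ = 0 :=
    (Matrix.IsHermitian.eigenvectorBasis hA).orthonormal.2 htr.symm
  set x : EuclideanSpace ℝ (Fin n) := a • (uu t : EuclideanSpace ℝ (Fin n)) + b • uu r with hx
  have hxk : ∀ k, x k = a * (uu t : EuclideanSpace ℝ (Fin n)) k
      + b * (uu r : EuclideanSpace ℝ (Fin n)) k := fun k => rfl
  have hxx : ⟪x, x⟫ = a ^ 2 + b ^ 2 := by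
    rw [hx]
    simp only [inner_add_left, inner_add_right, real_inner_smul_left, real_inner_smul_right,
      hself, horth, horth']
    ring
  refine ⟨x, ?_, ?_, ?_⟩
  · simp_rw [hxk]
    rw [Finset.sum_add_distrib, ← Finset.mul_sum, ← Finset.mul_sum, ← hS₁, ← hS₂]
    exact hmix
  · have h := hxx
    rw [show ⟪x, x⟫ = ∑ k, x k * x k by simp only [PiLp.inner_apply, Real.inner_apply]] at h
    rw [← hab, ← h]
    exact Finset.sum_congr rfl fun k _ => (sq (x k)) ▸ rfl
  · rw [← csn_bridge M x x]
    have hTx : T x = (a * lam t) • (uu t : EuclideanSpace ℝ (Fin n)) + (b * lam r) • uu r := by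
      rw [hx, map_add, LinearMap.map_smul, LinearMap.map_smul, csn_hTu, csn_hTu,
        smul_smul, smul_smul]
    rw [hx, hTx]
    simp only [inner_add_left, inner_add_right, real_inner_smul_left, real_inner_smul_right,
      hself, horth, horth']
    have hram := csn_lam_nonneg M r
    nlinarith [sq_nonneg a, sq_nonneg b, hab, hrt]

end Core

/-- If M ∈ ℝ^{n×n} is doubly stochastic, then the metric consensus
seminorm for p = 2 equals σ₂(M), the second largest singular value of M (the
second-to-last entry of the singular values sorted in increasing order). -/
theorem metricSN_two_doubly_stochastic (n : ℕ) (hn : 2 ≤ n)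
    (M : Matrix (Fin n) (Fin n) ℝ)
    (hnonneg : ∀ i j, 0 ≤ M i j)
    (hrow : ∀ i, ∑ j, M i j = 1)
    (hcol : ∀ j, ∑ i, M i j = 1) :
    metricSN 2 M =
      (singularValues M ∘ Tuple.sort (singularValues M)) ⟨n - 2, by omega⟩ := by
  classical
  have hn0 : 0 < n := by omega
  set lam := (show (Mᵀ * M).IsHermitian from by
      simpa only [Matrix.conjTranspose_eq_transpose_of_trivial] using
        Matrix.isHermitian_conjTranspose_mul_self M).eigenvalues with hlamdef
  set σ : Equiv.Perm (Fin n) := Tuple.sort lam with hσdef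
  have hmono : Monotone (lam ∘ σ) := Tuple.monotone_sort lam
  set li : Fin n := ⟨n-1, by omega⟩ with hlidef
  set si : Fin n := ⟨n-2, by omega⟩ with hsidef
  set t : Fin n := σ li with htdef
  set r : Fin n := σ si with hrdef
  have hmaxt : ∀ i, lam i ≤ lam t := by
    intro i
    have h1 : lam i = (lam ∘ σ) (σ.symm i) := by simp
    rw [h1, htdef]
    refine hmono ?_
    have h2 := (σ.symm i).isLt
    have h3 : ((σ.symm i : Fin n) : ℕ) ≤ n - 1 := by omega
    exact Fin.le_def.mpr (by rw [hlidef]; exact h3)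
  have hsecond : ∀ i, i ≠ t → lam i ≤ lam r := by
    intro i hi
    have h1 : lam i = (lam ∘ σ) (σ.symm i) := by simp
    rw [h1, hrdef]
    refine hmono ?_
    have hne : σ.symm i ≠ li := by
      intro h
      apply hi
      rw [htdef, ← h]
      simp
    have hlt := (σ.symm i).isLt
    have hne' : ((σ.symm i : Fin n) : ℕ) ≠ n - 1 := by
      intro h
      exact hne (Fin.val_injective (by rw [hlidef]; exact h))
    have h3 : ((σ.symm i : Fin n) : ℕ) ≤ n - 2 := by omega
    exact Fin.le_def.mpr (by rw [hsidef]; exact h3)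
  have htr : t ≠ r := by
    intro h
    have h2 : li = si := σ.injective h
    have h3 : (li : ℕ) = (si : ℕ) := congrArg Fin.val h2
    rw [hlidef, hsidef] at h3
    have h4 : n - 1 = n - 2 := h3
    omega
  have hrt : lam r ≤ lam t := hmaxt r
  have hr0 : 0 ≤ lam r := csn_lam_nonneg M r
  have hnsq : ∀ z : EuclideanSpace ℝ (Fin n), ‖z‖ ^ 2 = ∑ k, z k ^ 2 := fun z => by
    rw [EuclideanSpace.norm_eq, Real.sq_sqrt (by positivity)]
    simp [Real.norm_eq_abs, sq_abs]
  -- lower bound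
  have key_lower : ∀ c : Fin n → ℝ,
      Real.sqrt (lam r) ≤ matPNorm 2 (M - Matrix.of fun _ j => c j) := by
    intro c
    obtain ⟨x, hx0, hx1, hxA⟩ := csn_L4 M t r htr hrt
    set N := M - Matrix.of fun _ j => c j with hN
    set f := LinearMap.toContinuousLinearMap
      (Matrix.toLin (PiLp.basisFun 2 ℝ (Fin n)) (PiLp.basisFun 2 ℝ (Fin n)) N) with hf
    have hxnorm : ‖x‖ = 1 := by
      have := hnsq x
      rw [hx1] at this
      nlinarith [norm_nonneg x]
    have hle := f.le_opNorm x
    rw [hxnorm, mul_one] at hle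
    refine le_trans ?_ hle
    have hNx : ∀ k, (N *ᵥ (x : Fin n → ℝ)) k = (M *ᵥ (x : Fin n → ℝ)) k - ∑ j, c j * x j := by
      intro k
      simp only [hN, Matrix.sub_mulVec, Pi.sub_apply, Matrix.mulVec, dotProduct,
        Matrix.of_apply, Matrix.sub_apply]
      rw [← Finset.sum_sub_distrib]
      exact Finset.sum_congr rfl fun j _ => by ring
    have hMx0 : ∑ k, (M *ᵥ (x : Fin n → ℝ)) k = 0 := by
      simp only [Matrix.mulVec, dotProduct]
      rw [Finset.sum_comm]
      calc ∑ j, ∑ k, M k j * x j = ∑ j, (∑ k, M k j) * x j := by simp_rw [Finset.sum_mul]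
        _ = ∑ j, x j := by simp_rw [hcol]; simp
        _ = 0 := hx0
    have hfxk : (fun k => (f x) k) = fun k => (N *ᵥ (x : Fin n → ℝ)) k := rfl
    have hnormsq : ‖f x‖ ^ 2 = ∑ k, ((N *ᵥ (x : Fin n → ℝ)) k) ^ 2 := by
      rw [hnsq (f x)]
      exact Finset.sum_congr rfl fun k _ => by rw [congrFun hfxk k]
    have hge : lam r ≤ ‖f x‖ ^ 2 := by
      rw [hnormsq]
      set s : ℝ := ∑ j, c j * x j with hs
      have hexp : ∑ k, ((N *ᵥ (x : Fin n → ℝ)) k) ^ 2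
          = (∑ k, ((M *ᵥ (x : Fin n → ℝ)) k) ^ 2)
            - 2 * s * (∑ k, (M *ᵥ (x : Fin n → ℝ)) k) + n * s ^ 2 := by
        have h1 : ∀ k ∈ Finset.univ, ((N *ᵥ (x : Fin n → ℝ)) k) ^ 2
            = ((M *ᵥ (x : Fin n → ℝ)) k) ^ 2 - 2 * s * ((M *ᵥ (x : Fin n → ℝ)) k) + s ^ 2 := by
          intro k _
          rw [hNx k]
          ring
        rw [Finset.sum_congr rfl h1, Finset.sum_add_distrib, Finset.sum_sub_distrib,
          ← Finset.mul_sum, Finset.sum_const, Finset.card_univ, Fintype.card_fin,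
          nsmul_eq_mul]
      rw [hexp, hMx0]
      have hq := csn_qf_eq M (x : Fin n → ℝ)
      have hns : (0:ℝ) ≤ n * s ^ 2 := by positivity
      have hxA' : lam r ≤ (x : Fin n → ℝ) ⬝ᵥ (Mᴴ * M) *ᵥ (x : Fin n → ℝ) := hxA
      nlinarith [hxA', hq]
    calc Real.sqrt (lam r) ≤ Real.sqrt (‖f x‖ ^ 2) := Real.sqrt_le_sqrt hge
      _ = ‖f x‖ := Real.sqrt_sq (norm_nonneg _)
  -- upper bound
  have key_upper : matPNorm 2 (M - Matrix.of fun _ j => (n:ℝ)⁻¹) ≤ Real.sqrt (lam r) := by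
    set N := M - Matrix.of fun _ j => (n:ℝ)⁻¹ with hN
    show ‖LinearMap.toContinuousLinearMap
      (Matrix.toLin (PiLp.basisFun 2 ℝ (Fin n)) (PiLp.basisFun 2 ℝ (Fin n)) N)‖ ≤ _
    set f := LinearMap.toContinuousLinearMap
      (Matrix.toLin (PiLp.basisFun 2 ℝ (Fin n)) (PiLp.basisFun 2 ℝ (Fin n)) N) with hf
    refine f.opNorm_le_bound (Real.sqrt_nonneg _) fun x => ?_
    set s : ℝ := (∑ k, x k) / n with hs
    set y : EuclideanSpace ℝ (Fin n) := WithLp.toLp 2 (fun k => x k - s) with hy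
    have hysum : ∑ k, y k = 0 := by
      simp only [hy, WithLp.ofLp_toLp]
      rw [Finset.sum_sub_distrib, Finset.sum_const, Finset.card_univ, Fintype.card_fin,
        nsmul_eq_mul, hs]
      field_simp
      ring
    have hNxy : ∀ k, (N *ᵥ (x : Fin n → ℝ)) k = (M *ᵥ (y : Fin n → ℝ)) k := by
      intro k
      have hL : (N *ᵥ (x : Fin n → ℝ)) k = (∑ j, M k j * x j) - s := by
        simp only [hN, Matrix.mulVec, dotProduct, Matrix.sub_apply, Matrix.of_apply]
        rw [Finset.sum_congr rfl
          (show ∀ j ∈ Finset.univ, (M k j - (n:ℝ)⁻¹) * x j = M k j * x j - (n:ℝ)⁻¹ * x j from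
            fun j _ => by ring),
          Finset.sum_sub_distrib, ← Finset.mul_sum, hs]
        field_simp
      have hR : (M *ᵥ (y : Fin n → ℝ)) k = (∑ j, M k j * x j) - s := by
        simp only [Matrix.mulVec, dotProduct, hy, WithLp.ofLp_toLp]
        rw [Finset.sum_congr rfl
          (show ∀ j ∈ Finset.univ, M k j * (x j - s) = M k j * x j - s * M k j from
            fun j _ => by ring)]
        rw [Finset.sum_sub_distrib, ← Finset.mul_sum, hrow k, mul_one]
      rw [hL, hR]
    have hfx2 : ‖f x‖ ^ 2 = ∑ k, ((M *ᵥ (y : Fin n → ℝ)) k) ^ 2 := by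
      rw [hnsq (f x)]
      exact Finset.sum_congr rfl fun k _ => by
        rw [show (f x) k = (N *ᵥ (x : Fin n → ℝ)) k from rfl, hNxy k]
    have hL3 := csn_L3 M hnonneg hrow hcol hn0 t r hmaxt hsecond y hysum
    have hyx : ∑ k, y k ^ 2 ≤ ∑ k, x k ^ 2 := by
      have h1 : ∀ k ∈ Finset.univ, y k ^ 2 = x k ^ 2 - 2 * s * x k + s ^ 2 := fun k _ => by
        simp only [hy, WithLp.ofLp_toLp]; ring
      rw [Finset.sum_congr rfl h1, Finset.sum_add_distrib, Finset.sum_sub_distrib,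
        ← Finset.mul_sum, Finset.sum_const, Finset.card_univ, Fintype.card_fin, nsmul_eq_mul]
      have hsx : ∑ k, x k = n * s := by rw [hs]; field_simp
      rw [hsx]
      nlinarith [sq_nonneg s, (by positivity : (0:ℝ) ≤ (n:ℝ))]
    have hfin : ‖f x‖ ^ 2 ≤ lam r * ∑ k, x k ^ 2 := by
      rw [hfx2, ← csn_qf_eq M (y : Fin n → ℝ)]
      calc (y : Fin n → ℝ) ⬝ᵥ (Mᴴ * M) *ᵥ (y : Fin n → ℝ) ≤ lam r * ∑ k, y k ^ 2 := hL3
        _ ≤ lam r * ∑ k, x k ^ 2 := mul_le_mul_of_nonneg_left hyx hr0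
    calc ‖f x‖ = Real.sqrt (‖f x‖ ^ 2) := (Real.sqrt_sq (norm_nonneg _)).symm
      _ ≤ Real.sqrt (lam r * ∑ k, x k ^ 2) := Real.sqrt_le_sqrt hfin
      _ = Real.sqrt (lam r) * Real.sqrt (∑ k, x k ^ 2) := Real.sqrt_mul hr0 _
      _ = Real.sqrt (lam r) * ‖x‖ := by rw [← hnsq x, Real.sqrt_sq (norm_nonneg _)]
  -- conclusion
  have hval : metricSN 2 M = Real.sqrt (lam r) := by
    refine le_antisymm ?_ (le_ciInf key_lower)
    refine le_trans (ciInf_le ⟨0, ?_⟩ (fun _ => (n:ℝ)⁻¹)) key_upper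
    rintro v ⟨c, rfl⟩
    exact norm_nonneg _
  rw [hval]
  have hmonosv : Monotone (singularValues M ∘ σ) := fun i j hij =>
    Real.sqrt_le_sqrt (hmono hij)
  have hcomp : singularValues M ∘ ⇑σ = singularValues M ∘ ⇑(Tuple.sort (singularValues M)) :=
    Tuple.comp_sort_eq_comp_iff_monotone.mpr hmonosv
  rw [← hcomp]
  rfl
end

section
/- Let S ∈ ℝ^{n×n} be a stochastic matrix and let [[S]] denote the n×n 0–1 matrix whose (i,j) entry is 1 if s_{ij} ≠ 0 and 0 otherwise. Then the metric consensus seminorm satisfies |S|_∞ < 1 if and only if there exists an entrywise nonnegative vector y ∈ ℝ^n such that (𝟏𝟏ᵀ − 2[[S]])y < 0 entrywise. -/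
open Matrix Finset
open scoped ENNReal

lemma toLin_top_apply {n m : ℕ} (M : Matrix (Fin n) (Fin m) ℝ)
    (x : PiLp ⊤ (fun _ : Fin m => ℝ)) (i : Fin n) :
    (LinearMap.toContinuousLinearMap
      (Matrix.toLin (PiLp.basisFun ⊤ ℝ (Fin m)) (PiLp.basisFun ⊤ ℝ (Fin n)) M)) x i
      = ∑ j, M i j * x j := by
  rw [LinearMap.coe_toContinuousLinearMap']
  simp only [Matrix.toLin_apply, PiLp.basisFun_repr, PiLp.basisFun_apply]
  rw [WithLp.ofLp_sum, Finset.sum_apply]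
  simp [Matrix.mulVec, dotProduct, PiLp.ofLp_single, Pi.single_apply,
    mul_ite, Finset.sum_ite_eq]

lemma norm_top_apply_le {m : ℕ} (x : PiLp ⊤ (fun _ : Fin m => ℝ)) (j : Fin m) :
    |x j| ≤ ‖x‖ := by
  rw [PiLp.norm_eq_ciSup]
  exact le_ciSup (f := fun j => ‖x j‖) (Finite.bddAbove_range _) j

lemma rowsum_le_matPNorm {n m : ℕ} (M : Matrix (Fin n) (Fin m) ℝ) (i : Fin n) :
    ∑ j, |M i j| ≤ matPNorm ⊤ M := by
  set f := LinearMap.toContinuousLinearMap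
    (Matrix.toLin (PiLp.basisFun ⊤ ℝ (Fin m)) (PiLp.basisFun ⊤ ℝ (Fin n)) M) with hf
  set x : PiLp ⊤ (fun _ : Fin m => ℝ) := WithLp.toLp ⊤ fun j => if 0 ≤ M i j then 1 else -1 with hx
  have hxle : ‖x‖ ≤ 1 := by
    rw [PiLp.norm_eq_ciSup]
    refine Real.iSup_le (fun j => ?_) zero_le_one
    simp only [hx, PiLp.toLp_apply]
    split_ifs <;> simp
  have h1 : ∑ j, |M i j| = f x i := by
    rw [toLin_top_apply]
    refine Finset.sum_congr rfl fun j _ => ?_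
    simp only [hx, PiLp.toLp_apply]
    split_ifs with h
    · rw [abs_of_nonneg h, mul_one]
    · rw [abs_of_neg (not_le.mp h), mul_neg_one]
  calc ∑ j, |M i j| = f x i := h1
    _ ≤ |f x i| := le_abs_self _
    _ ≤ ‖f x‖ := norm_top_apply_le _ i
    _ ≤ ‖f‖ * ‖x‖ := f.le_opNorm x
    _ ≤ ‖f‖ * 1 := by nlinarith [norm_nonneg f]
    _ = matPNorm ⊤ M := by rw [mul_one, hf]; rfl

lemma matPNorm_le_of_rowsums {n m : ℕ} (M : Matrix (Fin n) (Fin m) ℝ) (r : ℝ)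
    (hr : 0 ≤ r) (h : ∀ i, ∑ j, |M i j| ≤ r) : matPNorm ⊤ M ≤ r := by
  refine ContinuousLinearMap.opNorm_le_bound _ hr fun x => ?_
  rw [PiLp.norm_eq_ciSup]
  refine Real.iSup_le (fun i => ?_) (mul_nonneg hr (norm_nonneg x))
  rw [toLin_top_apply]
  calc |∑ j, M i j * x j| ≤ ∑ j, |M i j * x j| := Finset.abs_sum_le_sum_abs _ _
    _ = ∑ j, |M i j| * |x j| := by simp [abs_mul]
    _ ≤ ∑ j, |M i j| * ‖x‖ := by
        refine Finset.sum_le_sum fun j _ => ?_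
        exact mul_le_mul_of_nonneg_left (norm_top_apply_le x j) (abs_nonneg _)
    _ = (∑ j, |M i j|) * ‖x‖ := by rw [Finset.sum_mul]
    _ ≤ r * ‖x‖ := mul_le_mul_of_nonneg_right (h i) (norm_nonneg x)

lemma metricSN_bddBelow {n m : ℕ} (M : Matrix (Fin n) (Fin m) ℝ) :
    BddBelow (Set.range fun c : Fin m → ℝ => matPNorm ⊤ (M - Matrix.of fun _ j => c j)) :=
  ⟨0, by rintro _ ⟨c, rfl⟩; exact norm_nonneg _⟩

/-- For a stochastic matrix S ∈ ℝ^{n×n}, the metric consensus seminorm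
satisfies |S|_∞ < 1 iff there exists an entrywise nonnegative vector y with
(𝟏𝟏ᵀ − 2[[S]])y < 0 entrywise, where [[S]] is the 0–1 pattern matrix of S. -/
theorem metricSN_infty_lt_one_iff (n : ℕ) (S : Matrix (Fin n) (Fin n) ℝ)
    (hS : IsStochastic S) :
    metricSN ⊤ S < 1 ↔
      ∃ y : Fin n → ℝ, (∀ i, 0 ≤ y i) ∧
        ∀ i, ∑ j, ((1 : ℝ) - 2 * (if S i j ≠ 0 then (1 : ℝ) else 0)) * y j < 0 := by
  constructor
  · intro h
    obtain ⟨c, hc⟩ := exists_lt_of_ciInf_lt h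
    have hrow : ∀ i, ∑ j, |S i j - c j| < 1 := by
      intro i
      refine lt_of_le_of_lt ?_ hc
      have := rowsum_le_matPNorm (S - Matrix.of fun _ j => c j) i
      simpa using this
    refine ⟨fun j => max (c j) 0, fun j => le_max_right _ _, fun i => ?_⟩
    have key : ∑ j, (((1 : ℝ) - 2 * (if S i j ≠ 0 then (1 : ℝ) else 0)) * max (c j) 0
        + (if S i j ≠ 0 then S i j else 0)) ≤ ∑ j, |S i j - c j| := by
      refine Finset.sum_le_sum fun j _ => ?_
      by_cases hz : S i j = 0
      · simp only [hz, ne_eq, not_true_eq_false, if_false, mul_zero, sub_zero,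
          zero_sub, abs_neg]
        have : max (c j) 0 ≤ |c j| := max_le (le_abs_self _) (abs_nonneg _)
        simpa using this
      · rw [if_pos hz, if_pos hz]
        have h1 : S i j - c j ≤ |S i j - c j| := le_abs_self _
        have h2 : c j ≤ max (c j) 0 := le_max_left _ _
        linarith
    have hsum1 : ∑ j, (if S i j ≠ 0 then S i j else 0) = 1 := by
      rw [← hS.2 i]
      refine Finset.sum_congr rfl fun j _ => ?_
      by_cases hz : S i j = 0
      · simp [hz]
      · rw [if_pos hz]
    rw [Finset.sum_add_distrib, hsum1] at key
    linarith [hrow i]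
  · rintro ⟨y, hy, hys⟩
    rcases Nat.eq_zero_or_pos n with hn | hn
    · subst hn
      have h0 : matPNorm ⊤ (S - Matrix.of fun _ j => (0 : Fin 0 → ℝ) j) ≤ 0 :=
        matPNorm_le_of_rowsums _ 0 le_rfl fun i => i.elim0
      exact lt_of_le_of_lt ((ciInf_le (metricSN_bddBelow S) 0).trans h0) one_pos
    · have i0 : Fin n := ⟨0, hn⟩
      -- minimum positive entry
      set P : Finset (Fin n × Fin n) := Finset.univ.filter (fun p => S p.1 p.2 ≠ 0) with hPdef
      have hP : P.Nonempty := by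
        have h1 : ∑ j, S i0 j = 1 := hS.2 i0
        have : ∃ j, S i0 j ≠ 0 := by
          by_contra hcon
          push_neg at hcon
          simp [hcon] at h1
        obtain ⟨j, hj⟩ := this
        exact ⟨(i0, j), by simp [hPdef, hj]⟩
      set m0 : ℝ := P.inf' hP (fun p => S p.1 p.2) with hm0def
      have hm0 : 0 < m0 := by
        rw [hm0def, Finset.lt_inf'_iff]
        rintro ⟨i, j⟩ hij
        rw [hPdef, Finset.mem_filter] at hij
        exact lt_of_le_of_ne (hS.1 i j) (Ne.symm hij.2)
      set T : ℝ := ∑ j, y j with hTdef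
      have hT : 0 ≤ T := Finset.sum_nonneg fun j _ => hy j
      set ε : ℝ := m0 / (1 + T) with hεdef
      have hε : 0 < ε := div_pos hm0 (by linarith)
      have hkey : ∀ i j, S i j ≠ 0 → ε * y j ≤ S i j := by
        intro i j hij
        have hyT : y j ≤ T := Finset.single_le_sum (fun k _ => hy k) (Finset.mem_univ j)
        have h1 : ε * y j ≤ ε * (1 + T) :=
          mul_le_mul_of_nonneg_left (by linarith) hε.le
        have h2 : ε * (1 + T) = m0 := by
          rw [hεdef]; field_simp
        have h3 : m0 ≤ S i j := by
          have := Finset.inf'_le (s := P) (b := (i, j)) (fun p => S p.1 p.2)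
            (by simp [hPdef, hij])
          exact this
        linarith
      set c : Fin n → ℝ := fun j => ε * y j with hcdef
      have hrow : ∀ i, ∑ j, |S i j - c j| < 1 := by
        intro i
        have heq : ∑ j, |S i j - c j|
            = 1 + ε * ∑ j, ((1 : ℝ) - 2 * (if S i j ≠ 0 then (1 : ℝ) else 0)) * y j := by
          have hterm : ∀ j, |S i j - c j|
              = (if S i j ≠ 0 then S i j else 0)
                + ε * (((1 : ℝ) - 2 * (if S i j ≠ 0 then (1 : ℝ) else 0)) * y j) := by
            intro j
            by_cases hz : S i j = 0
            · have : 0 ≤ ε * y j := mul_nonneg hε.le (hy j)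
              simp only [hz, ne_eq, not_true_eq_false, if_false, hcdef, zero_sub, abs_neg]
              rw [abs_of_nonneg this]
              ring
            · rw [if_pos hz, if_pos hz]
              have h0 : (0 : ℝ) ≤ S i j - c j := by
                show (0 : ℝ) ≤ S i j - ε * y j
                linarith [hkey i j hz]
              rw [abs_of_nonneg h0]
              simp only [hcdef]
              ring
          rw [Finset.sum_congr rfl fun j _ => hterm j, Finset.sum_add_distrib,
            ← Finset.mul_sum]
          congr 1
          rw [← hS.2 i]
          refine Finset.sum_congr rfl fun j _ => ?_
          by_cases hz : S i j = 0
          · simp [hz]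
          · rw [if_pos hz]
        rw [heq]
        have := mul_neg_of_pos_of_neg hε (hys i)
        linarith
      set r : ℝ := Finset.univ.sup' (Finset.univ_nonempty_iff.mpr ⟨i0⟩)
        (fun i => ∑ j, |S i j - c j|) with hrdef
      have hr1 : r < 1 := by
        rw [hrdef, Finset.sup'_lt_iff]
        exact fun i _ => hrow i
      have hr0 : 0 ≤ r := by
        refine le_trans ?_ (Finset.le_sup' _ (Finset.mem_univ i0))
        exact Finset.sum_nonneg fun j _ => abs_nonneg _
      have hb : matPNorm ⊤ (S - Matrix.of fun _ j => c j) ≤ r := by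
        refine matPNorm_le_of_rowsums _ r hr0 fun i => ?_
        refine le_trans (le_of_eq ?_) (Finset.le_sup' _ (Finset.mem_univ i))
        simp
      exact lt_of_le_of_lt ((ciInf_le (metricSN_bddBelow S) c).trans hb) hr1
end

section
/- Let m, n > 1, let p ∈ [1,∞], and let M ∈ ℝ^{n×m} have all row sums equal. Then the induced consensus seminorm satisfies ⟨M⟩_p ≤ |M|_p, where |M|_p is the metric consensus seminorm of M. -/
open Matrix Finset
open scoped ENNReal

lemma toLin_piLp (p : ℝ≥0∞) [Fact (1 ≤ p)] {n m : ℕ} (M : Matrix (Fin n) (Fin m) ℝ)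
    (v : PiLp p (fun _ : Fin m => ℝ)) :
    (Matrix.toLin (PiLp.basisFun p ℝ (Fin m)) (PiLp.basisFun p ℝ (Fin n)) M) v
      = (WithLp.equiv p (Fin n → ℝ)).symm (M.mulVec (WithLp.equiv p (Fin m → ℝ) v)) := by
  apply (PiLp.basisFun p ℝ (Fin n)).equivFun.injective
  rw [PiLp.basisFun_equivFun]
  funext i
  rw [Matrix.toLin_apply]
  simp [PiLp.basisFun_equivFun, Matrix.mulVec, dotProduct, PiLp.basisFun_apply,
    WithLp.equiv_symm_apply, PiLp.toLp_apply, Pi.single_apply]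

lemma mulVec_norm_le (p : ℝ≥0∞) [Fact (1 ≤ p)] {n m : ℕ} (M : Matrix (Fin n) (Fin m) ℝ)
    (w : Fin m → ℝ) :
    ‖(WithLp.equiv p (Fin n → ℝ)).symm (M.mulVec w)‖
      ≤ matPNorm p M * ‖(WithLp.equiv p (Fin m → ℝ)).symm w‖ := by
  have := (LinearMap.toContinuousLinearMap
    (Matrix.toLin (PiLp.basisFun p ℝ (Fin m)) (PiLp.basisFun p ℝ (Fin n)) M)).le_opNorm
    ((WithLp.equiv p (Fin m → ℝ)).symm w)
  rwa [LinearMap.coe_toContinuousLinearMap', toLin_piLp, Equiv.apply_symm_apply] at this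

lemma vecSN_bdd (p : ℝ≥0∞) [Fact (1 ≤ p)] {m : ℕ} (x : Fin m → ℝ) :
    BddBelow (Set.range fun c : ℝ => ‖(WithLp.equiv p (Fin m → ℝ)).symm (x - fun _ => c)‖) :=
  ⟨0, by rintro r ⟨c, rfl⟩; exact norm_nonneg _⟩

lemma vecSN_le (p : ℝ≥0∞) [Fact (1 ≤ p)] {m : ℕ} (x : Fin m → ℝ) (e : ℝ) :
    vecSN p x ≤ ‖(WithLp.equiv p (Fin m → ℝ)).symm (x - fun _ => e)‖ :=
  ciInf_le (vecSN_bdd p x) e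


/-- For m, n > 1, p ∈ [1,∞], and M ∈ ℝ^{n×m} with all row sums equal,
the induced consensus seminorm satisfies ⟨M⟩_p ≤ |M|_p. -/
theorem inducedSN_le_metricSN (n m : ℕ) (hn : 1 < n) (hm : 1 < m)
    (p : ℝ≥0∞) [Fact (1 ≤ p)]
    (M : Matrix (Fin n) (Fin m) ℝ)
    (h : ∀ i i', ∑ j, M i j = ∑ j, M i' j) :
    inducedSN p M ≤ metricSN p M := by
  have hms : 0 ≤ metricSN p M := by
    unfold metricSN
    exact Real.iInf_nonneg fun c => matPNorm_nonneg p _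
  unfold inducedSN
  apply Real.sSup_le _ hms
  rintro r ⟨x, hx, rfl⟩
  unfold metricSN
  apply le_ciInf
  intro c
  set i₀ : Fin n := ⟨0, Nat.lt_of_lt_of_le Nat.zero_lt_one hn.le⟩
  set a : ℝ := matPNorm p (M - Matrix.of fun _ j => c j) with ha
  have ha0 : 0 ≤ a := matPNorm_nonneg p _
  -- key: for all d, vecSN p (M.mulVec x) ≤ a * ‖x - d1‖
  have key : ∀ d : ℝ, vecSN p (M.mulVec x)
      ≤ a * ‖(WithLp.equiv p (Fin m → ℝ)).symm (x - fun _ => d)‖ := by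
    intro d
    have heq : M.mulVec x - (fun _ : Fin n =>
        d * ∑ j, M i₀ j + ∑ j, c j * x j - d * ∑ j, c j)
        = (M - Matrix.of fun _ j => c j).mulVec (x - fun _ => d) := by
      funext i
      simp only [Pi.sub_apply, Matrix.mulVec, dotProduct, Matrix.sub_apply, Matrix.of_apply]
      rw [show (∑ j, M i₀ j) = ∑ j, M i j from (h i i₀).symm]
      have expand : ∑ j, (M i j - c j) * (x j - d)
          = ∑ j, M i j * x j - d * ∑ j, M i j - ∑ j, c j * x j + d * ∑ j, c j := by
        rw [Finset.mul_sum, Finset.mul_sum, ← Finset.sum_sub_distrib,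
          ← Finset.sum_sub_distrib, ← Finset.sum_add_distrib]
        exact Finset.sum_congr rfl fun j _ => by ring
      rw [expand]
      ring_nf
    calc vecSN p (M.mulVec x)
        ≤ ‖(WithLp.equiv p (Fin n → ℝ)).symm (M.mulVec x - fun _ =>
            d * ∑ j, M i₀ j + ∑ j, c j * x j - d * ∑ j, c j)‖ := vecSN_le p _ _
      _ = ‖(WithLp.equiv p (Fin n → ℝ)).symm
            ((M - Matrix.of fun _ j => c j).mulVec (x - fun _ => d))‖ := by rw [heq]
      _ ≤ a * ‖(WithLp.equiv p (Fin m → ℝ)).symm (x - fun _ => d)‖ := by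
          rw [ha]
          exact mulVec_norm_le p (M - Matrix.of fun _ j => c j) (x - fun _ => d)
  rcases eq_or_lt_of_le ha0 with ha0' | ha0'
  · have := key 0
    rw [← ha0', zero_mul] at this
    exact this.trans ha0
  · have h1 : vecSN p (M.mulVec x) / a ≤ vecSN p x := by
      apply le_ciInf
      intro d
      rw [div_le_iff₀ ha0', mul_comm]
      exact key d
    rw [hx] at h1
    linarith [(div_le_one ha0').mp h1]
end

section
/- For any M ∈ ℝ^{n×n} whose row sums are all equal, the induced consensus seminorm for p = ∞ equals the coefficient of ergodicity: ⟨M⟩_∞ = (1/2)·max_{i,j} Σ_{k=1}^n |m_{ik} − m_{jk}|. -/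
open Matrix Finset
open scoped ENNReal

private lemma norm_top_eq {m : ℕ} (y : Fin m → ℝ) :
    ‖(WithLp.equiv ⊤ (Fin m → ℝ)).symm y‖ = ⨆ i, |y i| := by
  rw [PiLp.norm_eq_ciSup]; rfl

private lemma my_ciSup_eq {ι : Type*} [Finite ι] {f : ι → ℝ} {a : ℝ}
    (hub : ∀ i, f i ≤ a) (hex : ∃ i, f i = a) : (⨆ i, f i) = a := by
  obtain ⟨i, hi⟩ := hex
  haveI : Nonempty ι := ⟨i⟩
  exact le_antisymm (ciSup_le hub) (hi ▸ le_ciSup (Finite.bddAbove_range f) i)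

private lemma my_ciInf_eq {ι : Type*} [Finite ι] {f : ι → ℝ} {a : ℝ}
    (hlb : ∀ i, a ≤ f i) (hex : ∃ i, f i = a) : (⨅ i, f i) = a := by
  obtain ⟨i, hi⟩ := hex
  haveI : Nonempty ι := ⟨i⟩
  exact le_antisymm (hi ▸ ciInf_le (Finite.bddBelow_range f) i) (le_ciInf hlb)

private lemma vecSN_top {m : ℕ} [Nonempty (Fin m)] (x : Fin m → ℝ) :
    vecSN ⊤ x = ((⨆ i, x i) - ⨅ i, x i) / 2 := by
  set a := ⨆ i, x i with ha
  set b := ⨅ i, x i with hb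
  have hxa : ∀ i, x i ≤ a := fun i => le_ciSup (Finite.bddAbove_range x) i
  have hbx : ∀ i, b ≤ x i := fun i => ciInf_le (Finite.bddBelow_range x) i
  have hlow : ∀ c : ℝ,
      (a - b) / 2 ≤ ‖(WithLp.equiv ⊤ (Fin m → ℝ)).symm (x - fun _ => c)‖ := by
    intro c
    rw [norm_top_eq]
    simp only [Pi.sub_apply]
    obtain ⟨i, hi⟩ := exists_eq_ciSup_of_finite (f := x)
    obtain ⟨j, hj⟩ := exists_eq_ciInf_of_finite (f := x)
    have h1 : |x i - c| ≤ ⨆ k, |x k - c| :=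
      le_ciSup (Finite.bddAbove_range fun k => |x k - c|) i
    have h2 : |x j - c| ≤ ⨆ k, |x k - c| :=
      le_ciSup (Finite.bddAbove_range fun k => |x k - c|) j
    have e1 : x i - c ≤ |x i - c| := le_abs_self _
    have e2 : c - x j ≤ |x j - c| := by
      rw [abs_sub_comm]; exact le_abs_self _
    rw [← ha] at hi
    rw [← hb] at hj
    linarith
  have hup : ‖(WithLp.equiv ⊤ (Fin m → ℝ)).symm (x - fun _ => (a + b) / 2)‖ ≤ (a - b) / 2 := by
    rw [norm_top_eq]
    simp only [Pi.sub_apply]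
    refine ciSup_le fun i => ?_
    have h1 := hxa i
    have h2 := hbx i
    rw [abs_le]
    constructor <;> linarith
  have hbdd : BddBelow (Set.range fun c : ℝ =>
      ‖(WithLp.equiv ⊤ (Fin m → ℝ)).symm (x - fun _ => c)‖) := by
    refine ⟨(a - b) / 2, ?_⟩
    rintro r ⟨c, rfl⟩
    exact hlow c
  unfold vecSN
  exact le_antisymm ((ciInf_le hbdd ((a + b) / 2)).trans hup) (le_ciInf hlow)

private lemma vecSN_mulVec_le {n : ℕ} [Nonempty (Fin n)] (M : Matrix (Fin n) (Fin n) ℝ)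
    (h : ∀ i i', ∑ j, M i j = ∑ j, M i' j) (x : Fin n → ℝ) (hx : vecSN ⊤ x = 1) :
    vecSN ⊤ (M.mulVec x) ≤ coeErg M := by
  rw [vecSN_top] at hx ⊢
  set a := ⨆ i, x i with ha
  set b := ⨅ i, x i with hb
  set c := (a + b) / 2 with hc
  have hxc : ∀ k, |x k - c| ≤ 1 := by
    intro k
    have h1 : x k ≤ a := le_ciSup (Finite.bddAbove_range x) k
    have h2 : b ≤ x k := ciInf_le (Finite.bddBelow_range x) k
    rw [abs_le]; constructor <;> [linarith ; linarith]
  obtain ⟨i0, hi0⟩ := exists_eq_ciSup_of_finite (f := M.mulVec x)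
  obtain ⟨j0, hj0⟩ := exists_eq_ciInf_of_finite (f := M.mulVec x)
  have hsum : ∑ k, (M i0 k - M j0 k) = 0 := by
    rw [Finset.sum_sub_distrib, h i0 j0, sub_self]
  have key : M.mulVec x i0 - M.mulVec x j0 ≤ ∑ k, |M i0 k - M j0 k| := by
    have e1 : M.mulVec x i0 - M.mulVec x j0 = ∑ k, (M i0 k - M j0 k) * (x k - c) := by
      have e2 : ∑ k, (M i0 k - M j0 k) * (x k - c)
          = ∑ k, (M i0 k - M j0 k) * x k - (∑ k, (M i0 k - M j0 k)) * c := by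
        rw [Finset.sum_mul, ← Finset.sum_sub_distrib]
        exact Finset.sum_congr rfl fun k _ => by ring
      rw [e2, hsum, zero_mul, sub_zero]
      simp [Matrix.mulVec, dotProduct, sub_mul, Finset.sum_sub_distrib]
    rw [e1]
    calc ∑ k, (M i0 k - M j0 k) * (x k - c)
        ≤ ∑ k, |M i0 k - M j0 k| * |x k - c| := by
          refine Finset.sum_le_sum fun k _ => ?_
          calc (M i0 k - M j0 k) * (x k - c) ≤ |(M i0 k - M j0 k) * (x k - c)| := le_abs_self _
            _ = |M i0 k - M j0 k| * |x k - c| := abs_mul _ _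
      _ ≤ ∑ k, |M i0 k - M j0 k| * 1 := by
          refine Finset.sum_le_sum fun k _ => ?_
          exact mul_le_mul_of_nonneg_left (hxc k) (abs_nonneg _)
      _ = ∑ k, |M i0 k - M j0 k| := by simp
  have hle : ∑ k, |M i0 k - M j0 k| ≤ ⨆ i, ⨆ j, ∑ k, |M i k - M j k| := by
    calc ∑ k, |M i0 k - M j0 k| ≤ ⨆ j, ∑ k, |M i0 k - M j k| :=
          le_ciSup (f := fun j => ∑ k, |M i0 k - M j k|) (Finite.bddAbove_range _) j0
      _ ≤ ⨆ i, ⨆ j, ∑ k, |M i k - M j k| :=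
          le_ciSup (Finite.bddAbove_range fun i => ⨆ j, ∑ k, |M i k - M j k|) i0
  rw [coeErg, ← hi0, ← hj0]
  linarith

private lemma vecSN_eq_one {m : ℕ} [Nonempty (Fin m)] (x : Fin m → ℝ)
    (hub : ∀ i, x i ≤ 1) (hlb : ∀ i, -1 ≤ x i)
    (h1 : ∃ i, x i = 1) (h2 : ∃ i, x i = -1) : vecSN ⊤ x = 1 := by
  rw [vecSN_top, my_ciSup_eq hub h1, my_ciInf_eq hlb h2]; norm_num

private lemma vecSN_top_nonneg {m : ℕ} [Nonempty (Fin m)] (y : Fin m → ℝ) :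
    0 ≤ vecSN ⊤ y := by
  rw [vecSN_top]
  obtain ⟨i⟩ := ‹Nonempty (Fin m)›
  have h1 : y i ≤ ⨆ k, y k := le_ciSup (Finite.bddAbove_range y) i
  have h2 : (⨅ k, y k) ≤ y i := ciInf_le (Finite.bddBelow_range y) i
  linarith

/-- For any M ∈ ℝ^{n×n} whose row sums are all equal, the induced
consensus seminorm for p = ∞ equals the coefficient of ergodicity:
⟨M⟩_∞ = (1/2)·max_{i,j} Σ_k |m_{ik} − m_{jk}|. -/
theorem inducedSN_infty_eq_coeErg (n : ℕ) (M : Matrix (Fin n) (Fin n) ℝ)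
    (h : ∀ i i', ∑ j, M i j = ∑ j, M i' j) :
    inducedSN ⊤ M = coeErg M := by
  rcases Nat.lt_or_ge n 2 with hn | hn
  · have hS : {r | ∃ x : Fin n → ℝ, vecSN ⊤ x = 1 ∧ r = vecSN ⊤ (M.mulVec x)} = ∅ := by
      ext r
      simp only [Set.mem_setOf_eq, Set.mem_empty_iff_false, iff_false, not_exists]
      rintro x ⟨hx, -⟩
      interval_cases n
      · have hz : vecSN ⊤ x = 0 := by
          unfold vecSN
          have hz0 : ∀ c : ℝ, ‖(WithLp.equiv ⊤ (Fin 0 → ℝ)).symm (x - fun _ => c)‖ = 0 := by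
            intro c; rw [PiLp.norm_eq_ciSup, Real.iSup_of_isEmpty]
          simp only [hz0, ciInf_const]
        rw [hz] at hx; norm_num at hx
      · have hz : vecSN ⊤ x = 0 := by
          rw [vecSN_top, ciSup_unique, ciInf_unique, sub_self, zero_div]
        rw [hz] at hx; norm_num at hx
    rw [inducedSN, hS, Real.sSup_empty]
    interval_cases n
    · rw [coeErg, Real.iSup_of_isEmpty, mul_zero]
    · rw [coeErg, ciSup_unique, ciSup_unique]
      simp
  · haveI : Nonempty (Fin n) := ⟨⟨0, by omega⟩⟩
    obtain ⟨p, hp⟩ := Finite.exists_max (fun p : Fin n × Fin n => ∑ k, |M p.1 k - M p.2 k|)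
    have hsup : (⨆ i, ⨆ j, ∑ k, |M i k - M j k|) = ∑ k, |M p.1 k - M p.2 k| := by
      apply le_antisymm
      · exact ciSup_le fun i => ciSup_le fun j => hp (i, j)
      · calc ∑ k, |M p.1 k - M p.2 k| ≤ ⨆ j, ∑ k, |M p.1 k - M j k| :=
              le_ciSup (f := fun j => ∑ k, |M p.1 k - M j k|) (Finite.bddAbove_range _) p.2
          _ ≤ ⨆ i, ⨆ j, ∑ k, |M i k - M j k| :=
              le_ciSup (Finite.bddAbove_range fun i => ⨆ j, ∑ k, |M i k - M j k|) p.1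
    have hd0 : ∑ k, (M p.1 k - M p.2 k) = 0 := by
      rw [Finset.sum_sub_distrib, h p.1 p.2, sub_self]
    have hmain : ∃ x : Fin n → ℝ, vecSN ⊤ x = 1 ∧ vecSN ⊤ (M.mulVec x) = coeErg M := by
      by_cases hall : ∀ k, M p.1 k - M p.2 k = 0
      · have hc0 : coeErg M = 0 := by
          rw [coeErg, hsup, Finset.sum_eq_zero fun k _ => by rw [hall k, abs_zero], mul_zero]
        refine ⟨fun k => if k = ⟨0, by omega⟩ then 1 else -1, ?_, ?_⟩
        · refine vecSN_eq_one _ (fun i => ?_) (fun i => ?_) ⟨⟨0, by omega⟩, by simp⟩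
            ⟨⟨1, by omega⟩, ?_⟩
          · split <;> norm_num
          · split <;> norm_num
          · rw [if_neg]
            simp only [ne_eq, Fin.mk.injEq]
            omega
        · rw [hc0]
          exact le_antisymm
            (hc0 ▸ vecSN_mulVec_le M h _ (by
              refine vecSN_eq_one _ (fun i => ?_) (fun i => ?_) ⟨⟨0, by omega⟩, by simp⟩
                ⟨⟨1, by omega⟩, ?_⟩
              · split <;> norm_num
              · split <;> norm_num
              · rw [if_neg]
                simp only [ne_eq, Fin.mk.injEq]
                omega))
            (vecSN_top_nonneg _)
      · push_neg at hall
        obtain ⟨k0, hk0⟩ := hall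
        have hpos : ∃ k, 0 < M p.1 k - M p.2 k := by
          by_contra hno; push_neg at hno
          have hz := (Finset.sum_eq_zero_iff_of_nonneg
            (f := fun k => -(M p.1 k - M p.2 k)) (fun k _ => by linarith [hno k])).mp
            (by rw [Finset.sum_neg_distrib, hd0, neg_zero])
          have h2 := hz k0 (Finset.mem_univ k0)
          apply hk0; linarith
        have hneg : ∃ k, M p.1 k - M p.2 k < 0 := by
          by_contra hno; push_neg at hno
          have hz := (Finset.sum_eq_zero_iff_of_nonneg
            (f := fun k => M p.1 k - M p.2 k) (fun k _ => hno k)).mp hd0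
          exact hk0 (hz k0 (Finset.mem_univ k0))
        obtain ⟨kp, hkp⟩ := hpos
        obtain ⟨km, hkm⟩ := hneg
        set x : Fin n → ℝ := fun k => if 0 < M p.1 k - M p.2 k then 1 else -1 with hxdef
        have hx1 : vecSN ⊤ x = 1 := by
          refine vecSN_eq_one _ (fun i => ?_) (fun i => ?_)
            ⟨kp, if_pos hkp⟩ ⟨km, if_neg (by linarith)⟩
          · rw [hxdef]; dsimp only; split <;> norm_num
          · rw [hxdef]; dsimp only; split <;> norm_num
        have hkey : M.mulVec x p.1 - M.mulVec x p.2 = ∑ k, |M p.1 k - M p.2 k| := by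
          have e0 : M.mulVec x p.1 - M.mulVec x p.2 = ∑ k, (M p.1 k - M p.2 k) * x k := by
            simp [Matrix.mulVec, dotProduct, sub_mul, Finset.sum_sub_distrib]
          rw [e0]
          refine Finset.sum_congr rfl fun k _ => ?_
          rw [hxdef]; dsimp only
          by_cases hk : 0 < M p.1 k - M p.2 k
          · rw [if_pos hk, mul_one, abs_of_pos hk]
          · rw [if_neg hk, abs_of_nonpos (by linarith)]; ring
        have hge : coeErg M ≤ vecSN ⊤ (M.mulVec x) := by
          rw [vecSN_top, coeErg, hsup]
          have h1 : M.mulVec x p.1 ≤ ⨆ i, M.mulVec x i :=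
            le_ciSup (Finite.bddAbove_range _) p.1
          have h2 : (⨅ i, M.mulVec x i) ≤ M.mulVec x p.2 :=
            ciInf_le (Finite.bddBelow_range _) p.2
          linarith
        exact ⟨x, hx1, le_antisymm (vecSN_mulVec_le M h x hx1) hge⟩
    obtain ⟨x, hx1, hx2⟩ := hmain
    have hub : ∀ r ∈ {r | ∃ y : Fin n → ℝ, vecSN ⊤ y = 1 ∧ r = vecSN ⊤ (M.mulVec y)},
        r ≤ coeErg M := by
      rintro r ⟨y, hy1, rfl⟩
      exact vecSN_mulVec_le M h y hy1
    have hmem : coeErg M ∈ {r | ∃ y : Fin n → ℝ, vecSN ⊤ y = 1 ∧ r = vecSN ⊤ (M.mulVec y)} :=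
      ⟨x, hx1, hx2.symm⟩
    rw [inducedSN]
    exact le_antisymm (csSup_le ⟨_, hmem⟩ hub) (le_csSup ⟨_, hub⟩ hmem)
end

section
/- Every stochastic matrix S ∈ ℝ^{n×n} that has at least one column all of whose entries are positive satisfies |S|_∞ < 1, where |·|_∞ is the metric consensus seminorm for p = ∞. -/
open Matrix Finset
open scoped ENNReal

lemma toLin_piLp_top_apply {n m : ℕ} (M : Matrix (Fin n) (Fin m) ℝ)
    (x : PiLp ⊤ fun _ : Fin m => ℝ) (i : Fin n) :
    (Matrix.toLin (PiLp.basisFun ⊤ ℝ (Fin m)) (PiLp.basisFun ⊤ ℝ (Fin n)) M) x i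
      = M.mulVec x i := by
  rw [Matrix.toLin_apply]
  rw [show (∑ j, (M *ᵥ ⇑((PiLp.basisFun ⊤ ℝ (Fin m)).repr x)) j • (PiLp.basisFun ⊤ ℝ (Fin n)) j) i
      = ∑ j, ((M *ᵥ ⇑((PiLp.basisFun ⊤ ℝ (Fin m)).repr x)) j • (PiLp.basisFun ⊤ ℝ (Fin n)) j) i
      from by rw [WithLp.ofLp_sum]; exact Finset.sum_apply i _ _]
  simp [PiLp.basisFun_apply, PiLp.basisFun_repr,
    Pi.single_apply, Matrix.mulVec, dotProduct]

/-- Every stochastic matrix S ∈ ℝ^{n×n} with at least one entrywise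
positive column satisfies |S|_∞ < 1 for the metric consensus seminorm. -/
theorem metricSN_infty_lt_one_of_positive_column (n : ℕ)
    (S : Matrix (Fin n) (Fin n) ℝ) (hS : IsStochastic S)
    (hcol : ∃ j, ∀ i, 0 < S i j) :
    metricSN ⊤ S < 1 := by
  obtain ⟨j0, hj0⟩ := hcol
  haveI : Nonempty (Fin n) := ⟨j0⟩
  have hn : 0 < n := j0.pos
  have hne : (Finset.univ : Finset (Fin n)).Nonempty := ⟨j0, Finset.mem_univ _⟩
  set ε : ℝ := Finset.univ.inf' hne (fun i => S i j0) with hεdef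
  have hεpos : 0 < ε := (Finset.lt_inf'_iff hne).2 fun i _ => hj0 i
  have hεle : ∀ i, ε ≤ S i j0 := fun i => Finset.inf'_le _ (Finset.mem_univ i)
  have hε1 : ε ≤ 1 := by
    calc ε ≤ S j0 j0 := hεle j0
    _ ≤ ∑ k, S j0 k := Finset.single_le_sum (fun k _ => hS.1 j0 k) (Finset.mem_univ j0)
    _ = 1 := hS.2 j0
  set c : Fin n → ℝ := fun k => if k = j0 then ε else 0 with hcdef
  set M : Matrix (Fin n) (Fin n) ℝ := S - Matrix.of (fun _ k => c k) with hMdef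
  have hrow : ∀ i, ∑ k, |M i k| = 1 - ε := by
    intro i
    have habs : ∀ k, |M i k|
        = M i k := by
      intro k
      apply abs_of_nonneg
      simp only [hMdef, Matrix.sub_apply, Matrix.of_apply, hcdef]
      by_cases hk : k = j0
      · subst hk; simpa using sub_nonneg.2 (hεle i)
      · simpa [hk] using hS.1 i k
    simp only [habs]
    simp only [hMdef, Matrix.sub_apply, Matrix.of_apply, hcdef, Finset.sum_sub_distrib, hS.2 i]
    rw [Finset.sum_ite_eq' Finset.univ j0 (fun _ => ε)]
    simp
  have hbound : matPNorm ⊤ M ≤ 1 - ε := by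
    apply ContinuousLinearMap.opNorm_le_bound _ (by linarith)
    intro x
    rw [LinearMap.coe_toContinuousLinearMap']
    rw [PiLp.norm_eq_ciSup]
    apply ciSup_le
    intro i
    rw [toLin_piLp_top_apply]
    have hx : ∀ k, |x k| ≤ ‖x‖ := by
      intro k
      rw [PiLp.norm_eq_ciSup]
      exact le_ciSup (f := fun k => ‖x k‖) (Finite.bddAbove_range _) k
    calc ‖M.mulVec x i‖
        = |∑ k, M i k * x k| := rfl
      _ ≤ ∑ k, |M i k * x k| := Finset.abs_sum_le_sum_abs _ _
      _ = ∑ k, |M i k| * |x k| := by simp [abs_mul]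
      _ ≤ ∑ k, |M i k| * ‖x‖ := by
          refine Finset.sum_le_sum fun k _ => mul_le_mul_of_nonneg_left (hx k) (abs_nonneg _)
      _ = (1 - ε) * ‖x‖ := by rw [← Finset.sum_mul, hrow i]
  have hinf : metricSN ⊤ S ≤ 1 - ε := by
    refine le_trans (ciInf_le ?_ c) hbound
    exact ⟨0, by rintro r ⟨d, rfl⟩; exact norm_nonneg _⟩
  linarith
end

section
/- Let Q ∈ ℝ^{(n−1)×n} be a full row rank matrix with kernel equal to span{𝟏}. Then for every A ∈ ℝ^{n×n} whose row sums are all equal, there exists a unique matrix Ā ∈ ℝ^{(n−1)×(n−1)} such that QA = ĀQ. Conversely, for every Ā ∈ ℝ^{(n−1)×(n−1)} there exists a matrix A ∈ ℝ^{n×n} with equal row sums such that QA = ĀQ, and any two such matrices A₁, A₂ differ by a matrix of the form 𝟏cᵀ: A₁ = A₂ + 𝟏cᵀ for some c ∈ ℝ^n. -/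
open Matrix Finset
open scoped ENNReal

/-- Let Q ∈ ℝ^{(n−1)×n} have full row rank with kernel span{𝟏}. Then
every A ∈ ℝ^{n×n} with equal row sums admits a unique Ā ∈ ℝ^{(n−1)×(n−1)} with
QA = ĀQ; conversely every Ā admits such an A with equal row sums, and any two such
A₁, A₂ differ by a matrix of the form 𝟏cᵀ. -/
theorem projected_matrix_correspondence (n : ℕ) (hn : 0 < n)
    (Q : Matrix (Fin (n - 1)) (Fin n) ℝ)
    (hrank : Q.rank = n - 1)
    (hker : LinearMap.ker Q.mulVecLin
        = Submodule.span ℝ {(fun _ => (1 : ℝ) : Fin n → ℝ)}) :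
    (∀ A : Matrix (Fin n) (Fin n) ℝ, (∀ i i', ∑ j, A i j = ∑ j, A i' j) →
      ∃! Abar : Matrix (Fin (n - 1)) (Fin (n - 1)) ℝ, Q * A = Abar * Q) ∧
    (∀ Abar : Matrix (Fin (n - 1)) (Fin (n - 1)) ℝ,
      ∃ A : Matrix (Fin n) (Fin n) ℝ,
        (∀ i i', ∑ j, A i j = ∑ j, A i' j) ∧ Q * A = Abar * Q) ∧
    (∀ (Abar : Matrix (Fin (n - 1)) (Fin (n - 1)) ℝ) (A₁ A₂ : Matrix (Fin n) (Fin n) ℝ),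
      (∀ i i', ∑ j, A₁ i j = ∑ j, A₁ i' j) → (∀ i i', ∑ j, A₂ i j = ∑ j, A₂ i' j) →
      Q * A₁ = Abar * Q → Q * A₂ = Abar * Q →
      ∃ c : Fin n → ℝ, A₁ = A₂ + Matrix.of fun _ j => c j) := by
  classical
  -- Q is surjective as a linear map
  have hsurj : LinearMap.range Q.mulVecLin = ⊤ := by
    apply Submodule.eq_top_of_finrank_eq
    rw [← Matrix.rank, hrank, Module.finrank_pi]
    simp
  obtain ⟨g, hg⟩ := Q.mulVecLin.exists_rightInverse_of_surjective hsurj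
  set R : Matrix (Fin n) (Fin (n - 1)) ℝ := LinearMap.toMatrix' g with hR
  have hQR : Q * R = 1 := by
    apply Matrix.toLin'.injective
    rw [Matrix.toLin'_mul]
    have h1 : Matrix.toLin' R = g := Matrix.toLin'_toMatrix' g
    have h2 : Matrix.toLin' Q = Q.mulVecLin := rfl
    rw [h1, h2, hg, Matrix.toLin'_one]
  -- membership in kernel gives scalar multiple of ones
  have hmem : ∀ v : Fin n → ℝ, Q.mulVec v = 0 → ∃ t : ℝ, v = t • (fun _ => (1:ℝ)) := by
    intro v hv
    have : v ∈ LinearMap.ker Q.mulVecLin := by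
      simpa [LinearMap.mem_ker, Matrix.mulVecLin_apply] using hv
    rw [hker, Submodule.mem_span_singleton] at this
    obtain ⟨t, ht⟩ := this
    exact ⟨t, ht.symm⟩
  have hQ1 : Q.mulVec (fun _ => (1:ℝ)) = 0 := by
    have : (fun _ => (1:ℝ) : Fin n → ℝ) ∈ LinearMap.ker Q.mulVecLin := by
      rw [hker]; exact Submodule.mem_span_singleton_self _
    simpa [LinearMap.mem_ker, Matrix.mulVecLin_apply] using this
  -- uniqueness helper: B * Q determines B
  have huniq : ∀ B₁ B₂ : Matrix (Fin (n-1)) (Fin (n-1)) ℝ, B₁ * Q = B₂ * Q → B₁ = B₂ := by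
    intro B₁ B₂ h
    have := congrArg (· * R) h
    simpa [Matrix.mul_assoc, hQR] using this
  refine ⟨?_, ?_, ?_⟩
  · -- part 1
    intro A hA
    have hA1 : ∃ s : ℝ, A.mulVec (fun _ => (1:ℝ)) = s • (fun _ => (1:ℝ)) := by
      refine ⟨∑ j, A ⟨0, hn⟩ j, funext fun i => ?_⟩
      simp [Matrix.mulVec, dotProduct, hA i ⟨0, hn⟩]
    obtain ⟨s, hs⟩ := hA1
    refine ⟨Q * A * R, ?_, ?_⟩
    · -- Q * A = (Q * A * R) * Q
      apply Matrix.toLin'.injective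
      apply LinearMap.ext
      intro x
      simp only [Matrix.toLin'_apply]
      obtain ⟨t, ht⟩ := hmem ((R * Q).mulVec x - x) (by
        have : Q.mulVec ((R * Q).mulVec x) = Q.mulVec x := by
          rw [Matrix.mulVec_mulVec, ← Matrix.mul_assoc, hQR, Matrix.one_mul]
        simp [Matrix.mulVec_sub, this])
      have key : A.mulVec ((R * Q).mulVec x) = A.mulVec x + (t * s) • (fun _ => (1:ℝ)) := by
        have h1 : (R * Q).mulVec x = x + t • (fun _ => (1:ℝ)) := by
          rw [← ht]; abel
        rw [h1, Matrix.mulVec_add, Matrix.mulVec_smul, hs, smul_smul]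
      calc (Q * A).mulVec x
          = Q.mulVec (A.mulVec x) := (Matrix.mulVec_mulVec x Q A).symm
        _ = Q.mulVec (A.mulVec x + (t * s) • (fun _ => (1:ℝ))) := by
            rw [Matrix.mulVec_add, Matrix.mulVec_smul, hQ1, smul_zero, add_zero]
        _ = Q.mulVec (A.mulVec ((R * Q).mulVec x)) := by rw [key]
        _ = (Q * A * R * Q).mulVec x := by
            rw [Matrix.mulVec_mulVec, Matrix.mulVec_mulVec, Matrix.mul_assoc (Q*A)]
    · intro B hB
      apply huniq
      rw [← hB]
      apply Matrix.toLin'.injective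
      apply LinearMap.ext
      intro x
      simp only [Matrix.toLin'_apply]
      obtain ⟨t, ht⟩ := hmem ((R * Q).mulVec x - x) (by
        have : Q.mulVec ((R * Q).mulVec x) = Q.mulVec x := by
          rw [Matrix.mulVec_mulVec, ← Matrix.mul_assoc, hQR, Matrix.one_mul]
        simp [Matrix.mulVec_sub, this])
      have key : A.mulVec ((R * Q).mulVec x) = A.mulVec x + (t * s) • (fun _ => (1:ℝ)) := by
        have h1 : (R * Q).mulVec x = x + t • (fun _ => (1:ℝ)) := by
          rw [← ht]; abel
        rw [h1, Matrix.mulVec_add, Matrix.mulVec_smul, hs, smul_smul]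
      symm
      calc (Q * A * R * Q).mulVec x
          = Q.mulVec (A.mulVec ((R * Q).mulVec x)) := by
            rw [Matrix.mulVec_mulVec, Matrix.mulVec_mulVec, Matrix.mul_assoc (Q*A)]
        _ = Q.mulVec (A.mulVec x + (t * s) • (fun _ => (1:ℝ))) := by rw [key]
        _ = Q.mulVec (A.mulVec x) := by
            rw [Matrix.mulVec_add, Matrix.mulVec_smul, hQ1, smul_zero, add_zero]
        _ = (Q * A).mulVec x := Matrix.mulVec_mulVec x Q A
  · -- part 2
    intro Abar
    refine ⟨R * Abar * Q, ?_, ?_⟩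
    · intro i i'
      have h0 : (R * Abar * Q).mulVec (fun _ => (1:ℝ)) = 0 := by
        rw [← Matrix.mulVec_mulVec, ← Matrix.mulVec_mulVec, hQ1]
        simp
      have hi := congrFun h0 i
      have hi' := congrFun h0 i'
      simp only [Matrix.mulVec, dotProduct, mul_one, Pi.zero_apply] at hi hi'
      simpa [mul_one] using hi.trans hi'.symm
    · rw [← Matrix.mul_assoc, ← Matrix.mul_assoc, hQR, Matrix.one_mul]
  · -- part 3
    intro Abar A₁ A₂ _ _ h1 h2
    have hdiff : Q * (A₁ - A₂) = 0 := by
      rw [Matrix.mul_sub, h1, h2, sub_self]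
    have hcol : ∀ j : Fin n, ∃ t : ℝ,
        (fun i => A₁ i j - A₂ i j) = t • (fun _ => (1:ℝ) : Fin n → ℝ) := by
      intro j
      apply hmem
      have : Q.mulVec ((A₁ - A₂).mulVec (Pi.single j 1)) = 0 := by
        rw [Matrix.mulVec_mulVec, hdiff, Matrix.zero_mulVec]
      simpa [Matrix.mulVec_single, Matrix.col_apply', Matrix.sub_apply] using this
    choose t ht using hcol
    refine ⟨t, ?_⟩
    ext i j
    have := congrFun (ht j) i
    simp only [Pi.smul_apply, smul_eq_mul, mul_one] at this
    simp only [Matrix.add_apply, Matrix.of_apply]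
    linarith
end
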